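/- arXiv:1805.01299 — 4 statements merged into one kernel-verified Lean document; each statement's English description precedes it below -/
import Mathlib

section
/- Let G = (U + W, E) be bipartite with perfect matching M, and let D(G, M) be the directed graph on vertex set U with an arc u → u' whenever there exist w ∈ W with uw ∈ M and wu' ∈ E \ M. Then G is robust (admits a perfect matching after removing any single edge) if and only if every strongly connected component of D(G, M) contains at least two vertices. -/
open SimpleGraph

variable {V : Type*}

/-- Two edges alternate with respect to the edge set `S`. -/
def altRel (S : Set (Sym2 V)) (e f : Sym2 V) : Prop := e ∈ S ↔ f ∉ S

/-- `c` is an `S`-alternating cycle: a cycle whose edges alternate between `S` and its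
complement (including the wrap-around pair). -/
def IsAltCycle (G : SimpleGraph V) (S : Set (Sym2 V)) {v : V} (c : G.Walk v v) : Prop :=
  c.IsCycle ∧ List.Chain' (altRel S) c.edges ∧
    ∀ e f, c.edges.head? = some e → c.edges.getLast? = some f → altRel S f e

/-- `G` admits a perfect matching. -/
def HasPM (G : SimpleGraph V) : Prop := ∃ M : G.Subgraph, M.IsPerfectMatching

/-- `G` admits a perfect matching after the deletion of any single edge. -/
def Robust (G : SimpleGraph V) : Prop := ∀ e ∈ G.edgeSet, HasPM (G.deleteEdges {e})

/-- `(U, W)` is a bipartition of `G`. -/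
def IsBipartitionOf (G : SimpleGraph V) (U W : Set V) : Prop :=
  (∀ v, v ∈ U ↔ v ∉ W) ∧ ∀ ⦃a b⦄, G.Adj a b → (a ∈ U ↔ b ∈ W)

/-- `M` is (the edge set of) a perfect matching of `G`. -/
def IsPMSet (G : SimpleGraph V) (M : Set (Sym2 V)) : Prop :=
  M ⊆ G.edgeSet ∧ ∀ v : V, ∃! e, e ∈ M ∧ v ∈ e

/-- The arcs of the auxiliary digraph `D(G, M)` on `U`. -/
def auxArc (G : SimpleGraph V) (M : Set (Sym2 V)) (U W : Set V) (u u' : V) : Prop :=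
  u ∈ U ∧ u' ∈ U ∧ ∃ w ∈ W, s(u, w) ∈ M ∧ s(w, u') ∈ G.edgeSet ∧ s(w, u') ∉ M

/-!
Write `p` for the partner map of `M`. If `G - u p(u)` has a perfect matching with partner map
`q`, then `σ = q ∘ p` is a permutation preserving `U` that moves `u` and sends every vertex of
`U` it moves along an arc of `D(G, M)`; the `σ`-orbit of `u` is then a closed walk of `D(G, M)`
through `u` and `σ u`. Conversely, a directed cycle `c` of `D(G, M)` through `u` lets each
`p(v)` be re-matched with `c(v)`: `c ∘ p ∘ c⁻¹` is a perfect matching avoiding `u p(u)`.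
Edges outside `M` are avoided by `M` itself.
-/

open Equiv Function

section Relation

variable {α : Type*} {R : α → α → Prop}

theorem exists_nodup_isChain_of_reflTransGen {a b : α} (h : Relation.ReflTransGen R a b) :
    ∃ l : List α, l.Nodup ∧ l.IsChain R ∧ l.head? = some a ∧ l.getLast? = some b := by
  classical
  induction h with
  | refl => exact ⟨[a], List.nodup_singleton a, .singleton a, rfl, rfl⟩
  | @tail x y _ hxy ih =>
    obtain ⟨l, hnd, hch, hhead, hlast⟩ := ih
    by_cases hy : y ∈ l
    · refine ⟨l.take (l.idxOf y + 1), hnd.sublist (List.take_sublist _ _), hch.take _,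
        by simpa [List.head?_take] using hhead, ?_⟩
      simp [List.getLast?_take, List.getElem?_idxOf hy]
    · have hne : l ≠ [] := by rintro rfl; simp at hhead
      refine ⟨l ++ [y], ?_, hch.append (.singleton y) ?_, ?_, by simp⟩
      · simpa [List.nodup_append] using ⟨hnd, fun z hz hzy => hy (hzy ▸ hz)⟩
      · simp [hlast, hxy]
      · rwa [List.head?_append_of_ne_nil _ hne]

theorem exists_perm_of_transGen_self (hR : ∀ v, ¬ R v v) {a : α}
    (h : Relation.TransGen R a a) :
    ∃ c : Perm α, c a ≠ a ∧ ∀ v, c v ≠ v → R v (c v) := by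
  classical
  obtain ⟨x, hax, hxa⟩ := Relation.TransGen.tail'_iff.mp h
  obtain ⟨l, hnd, hch, hhead, hlast⟩ := exists_nodup_isChain_of_reflTransGen hax
  have ha : a ∈ l := List.mem_of_mem_head? hhead
  refine ⟨l.formPerm, (List.formPerm_apply_mem_ne_self_iff l hnd a ha).mpr ?_, fun v hv => ?_⟩
  · by_contra! hl
    obtain ⟨z, rfl⟩ := List.length_eq_one_iff.mp
      (show l.length = 1 by have := List.length_pos_of_mem ha; omega)
    simp only [List.head?_cons, List.getLast?_singleton, Option.some.injEq] at hhead hlast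
    subst hhead hlast
    exact hR _ hxa
  · obtain ⟨i, hi, rfl⟩ := List.getElem_of_mem (List.mem_of_formPerm_apply_ne hv)
    rw [List.formPerm_apply_getElem _ hnd]
    rcases Nat.lt_or_ge (i + 1) l.length with hi' | hi'
    · convert List.isChain_iff_getElem.mp hch i hi' using 2
      exact Nat.mod_eq_of_lt hi'
    · have hlen : i + 1 = l.length := by omega
      have hx : l[i] = x := by
        simpa [List.getLast?_eq_getElem?, ← hlen] using hlast
      have ha' : l[0] = a := by
        rw [List.head?_eq_getElem?, List.getElem?_eq_getElem (by omega)] at hhead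
        exact Option.some.inj hhead
      convert hxa using 2
      simpa [hlen] using ha'

theorem Equiv.Perm.SameCycle.reflTransGen [Finite α] {σ : Perm α} {S : Set α}
    (hS : ∀ v ∈ S, σ v ∈ S) (hR : ∀ v ∈ S, σ v ≠ v → R v (σ v)) {x y : α}
    (hx : x ∈ S) (h : σ.SameCycle x y) : Relation.ReflTransGen R x y := by
  obtain ⟨n, rfl⟩ := h.exists_nat_pow_eq
  suffices ∀ n, (σ ^ n) x ∈ S ∧ Relation.ReflTransGen R x ((σ ^ n) x) from (this n).2
  intro n
  induction n with
  | zero => exact ⟨hx, .refl⟩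
  | succ n ih =>
    rw [pow_succ', Perm.mul_apply]
    refine ⟨hS _ ih.1, ?_⟩
    by_cases hfix : σ ((σ ^ n) x) = (σ ^ n) x
    · rw [hfix]; exact ih.2
    · exact ih.2.tail (hR _ ih.1 hfix)

end Relation

namespace IsPMSet

variable {G : SimpleGraph V} {M : Set (Sym2 V)}

theorem existsUnique_mem (hM : IsPMSet G M) (v : V) : ∃! w, s(v, w) ∈ M := by
  obtain ⟨e, ⟨heM, hve⟩, he⟩ := hM.2 v
  obtain ⟨w, rfl⟩ := Sym2.mem_iff_exists.mp hve
  exact ⟨w, heM, fun y hy => Sym2.congr_right.mp (he s(v, y) ⟨hy, Sym2.mem_mk_left v y⟩)⟩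

noncomputable def mate (hM : IsPMSet G M) (v : V) : V := (hM.existsUnique_mem v).choose

theorem mate_mem (hM : IsPMSet G M) (v : V) : s(v, hM.mate v) ∈ M :=
  (hM.existsUnique_mem v).choose_spec.1

theorem mem_iff_eq_mate (hM : IsPMSet G M) {v w : V} : s(v, w) ∈ M ↔ w = hM.mate v :=
  ⟨fun h => (hM.existsUnique_mem v).choose_spec.2 w h, fun h => h ▸ hM.mate_mem v⟩

theorem mate_involutive (hM : IsPMSet G M) : Involutive hM.mate := fun v =>
  (hM.mem_iff_eq_mate.mp (Sym2.eq_swap ▸ hM.mate_mem v)).symm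

theorem adj_mate (hM : IsPMSet G M) (v : V) : G.Adj v (hM.mate v) :=
  hM.1 (hM.mate_mem v)

end IsPMSet

theorem hasPM_iff_exists_involutive {G : SimpleGraph V} :
    HasPM G ↔ ∃ f : V → V, Involutive f ∧ ∀ v, G.Adj v (f v) := by
  constructor
  · rintro ⟨M, hM⟩
    choose f hf hfu using Subgraph.isPerfectMatching_iff.mp hM
    exact ⟨f, fun v => (hfu _ v (hf v).symm).symm, fun v => M.adj_sub (hf v)⟩
  · rintro ⟨f, hf, hadj⟩
    refine ⟨{ verts := Set.univ
              Adj := fun v w => f v = w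
              adj_sub := fun h => h ▸ hadj _
              edge_vert := fun _ => Set.mem_univ _
              symm := ⟨fun v w h => h ▸ hf v⟩ }, ?_⟩
    exact Subgraph.isPerfectMatching_iff.mpr fun v => ⟨f v, rfl, fun _ h => Eq.symm h⟩

theorem hasPM_deleteEdges_iff {G : SimpleGraph V} {a b : V} :
    HasPM (G.deleteEdges {s(a, b)}) ↔
      ∃ f : V → V, Involutive f ∧ (∀ v, G.Adj v (f v)) ∧ f a ≠ b := by
  simp only [hasPM_iff_exists_involutive, deleteEdges_adj, Set.mem_singleton_iff]
  refine exists_congr fun f => and_congr_right fun hf =>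
    ⟨fun h => ⟨fun v => (h v).1, ?_⟩, ?_⟩
  · exact fun hfa => (h a).2 (by rw [hfa])
  · rintro ⟨hadj, hfa⟩ v
    refine ⟨hadj v, fun hv => hfa ?_⟩
    rcases Sym2.eq_iff.mp hv with ⟨rfl, rfl⟩ | ⟨rfl, rfl⟩
    · rfl
    · exact hf v

theorem hasPM_deleteEdges_of_perm {G : SimpleGraph V} {U : Set V} {p : V → V}
    (hp : Involutive p) (hadj : ∀ v, G.Adj v (p v)) (hpU : ∀ v ∈ U, p v ∉ U) {c : Perm V}
    (hc : ∀ v, c v ≠ v → v ∈ U ∧ G.Adj (p v) (c v)) {a : V} (ha : c a ≠ a) :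
    HasPM (G.deleteEdges {s(a, p a)}) := by
  have hfix : ∀ v ∉ U, c v = v := fun v hv => by_contra fun h => hv (hc v h).1
  have hpc : ∀ v, G.Adj (p v) (c v) := fun v => by
    rcases eq_or_ne (c v) v with h | h
    · rw [h]; exact (hadj v).symm
    · exact (hc v h).2
  have hcpc : ∀ x, G.Adj (c x) (c (p x)) := fun x => by
    by_cases hx : x ∈ U
    · rw [hfix _ (hpU x hx)]; exact (hpc x).symm
    · rw [hfix x hx]; simpa only [hp x] using hpc (p x)
  refine hasPM_deleteEdges_iff.mpr
    ⟨fun v => c (p (c.symm v)), fun v => ?_, fun v => ?_, fun h => ?_⟩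
  · simp only [symm_apply_apply, hp _, apply_symm_apply]
  · simpa only [apply_symm_apply] using hcpc (c.symm v)
  · have hx : c.symm a ∈ U := (hc _ (by simpa [eq_symm_apply] using ha)).1
    change c (p (c.symm a)) = p a at h
    rw [hfix _ (hpU _ hx)] at h
    exact ha ((eq_symm_apply c).mp (hp.injective h).symm)

theorem IsBipartitionOf.mem_iff_notMem_of_adj {G : SimpleGraph V} {U W : Set V}
    (hbip : IsBipartitionOf G U W) {a b : V} (h : G.Adj a b) : b ∈ U ↔ a ∉ U := by
  rw [hbip.1 b, ← hbip.2 h]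

section Bipartite

variable {G : SimpleGraph V} {U W : Set V} {M : Set (Sym2 V)}

theorem IsPMSet.mate_notMem (hbip : IsBipartitionOf G U W) (hM : IsPMSet G M) {v : V}
    (hv : v ∈ U) : hM.mate v ∉ U :=
  fun h => (hbip.mem_iff_notMem_of_adj (hM.adj_mate v)).mp h hv

theorem IsPMSet.exists_eq_mate_of_mem (hbip : IsBipartitionOf G U W) (hM : IsPMSet G M)
    {e : Sym2 V} (he : e ∈ M) : ∃ u ∈ U, e = s(u, hM.mate u) := by
  induction e using Sym2.ind with
  | _ a b =>
    rw [hM.mem_iff_eq_mate] at he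
    subst he
    by_cases ha : a ∈ U
    · exact ⟨a, ha, rfl⟩
    · refine ⟨hM.mate a, (hbip.mem_iff_notMem_of_adj (hM.adj_mate a)).mpr ha, ?_⟩
      rw [hM.mate_involutive a, Sym2.eq_swap]

theorem auxArc_iff (hbip : IsBipartitionOf G U W) (hM : IsPMSet G M) {u u' : V} :
    auxArc G M U W u u' ↔ u ∈ U ∧ G.Adj (hM.mate u) u' ∧ u' ≠ u := by
  constructor
  · rintro ⟨hu, -, w, -, huw, hwu', hnot⟩
    rw [hM.mem_iff_eq_mate] at huw
    subst huw
    refine ⟨hu, hwu', fun h => hnot ?_⟩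
    rw [h, Sym2.eq_swap]
    exact hM.mate_mem u
  · rintro ⟨hu, hadj, hne⟩
    have hmate := hM.mate_notMem hbip hu
    refine ⟨hu, (hbip.mem_iff_notMem_of_adj hadj).mpr hmate, hM.mate u,
      not_not.mp ((hbip.1 _).not.mp hmate), hM.mate_mem u, hadj, fun h => hne ?_⟩
    rw [hM.mem_iff_eq_mate, hM.mate_involutive] at h
    exact h

end Bipartite

theorem robust_iff_scc_nontrivial_general
    {V : Type*} [Fintype V] (G : SimpleGraph V) (U W : Set V)
    (hbip : IsBipartitionOf G U W) (M : Set (Sym2 V)) (hM : IsPMSet G M) :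
    Robust G ↔
      ∀ u ∈ U, ∃ u' ∈ U, u' ≠ u ∧
        Relation.ReflTransGen (auxArc G M U W) u u' ∧
        Relation.ReflTransGen (auxArc G M U W) u' u := by
  have hpU : ∀ v ∈ U, hM.mate v ∉ U := fun _ => hM.mate_notMem hbip
  constructor
  · intro hrob u hu
    obtain ⟨q, hq, hqadj, hqu⟩ := hasPM_deleteEdges_iff.mp (hrob _ (hM.adj_mate u))
    let σ : Perm V := (hM.mate_involutive.toPerm _).trans (hq.toPerm _)
    have hσ : ∀ v ∈ U, σ v ∈ U ∧ (σ v ≠ v → auxArc G M U W v (σ v)) := fun v hv =>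
      ⟨(hbip.mem_iff_notMem_of_adj (hqadj _)).mpr (hpU v hv),
        fun hne => (auxArc_iff hbip hM).mpr ⟨hv, hqadj _, hne⟩⟩
    have hσu : σ u ≠ u := fun h => hqu (hq.eq_iff.mp h).symm
    refine ⟨σ u, (hσ u hu).1, hσu, .single ((hσ u hu).2 hσu), ?_⟩
    exact Perm.SameCycle.reflTransGen (fun v hv => (hσ v hv).1) (fun v hv => (hσ v hv).2)
      (hσ u hu).1 (Perm.sameCycle_apply_left.mpr (.refl _ _))
  · intro hscc e he
    by_cases heM : e ∈ M
    · obtain ⟨u, hu, rfl⟩ := hM.exists_eq_mate_of_mem hbip heM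
      obtain ⟨u', -, hne, hto, hfrom⟩ := hscc u hu
      have hcycle : Relation.TransGen (auxArc G M U W) u u :=
        ((Relation.reflTransGen_iff_eq_or_transGen.mp hto).resolve_left hne).trans_left hfrom
      obtain ⟨c, hcu, hc⟩ :=
        exists_perm_of_transGen_self (fun v h => ((auxArc_iff hbip hM).mp h).2.2 rfl) hcycle
      exact hasPM_deleteEdges_of_perm hM.mate_involutive hM.adj_mate hpU
        (fun v hv => ((auxArc_iff hbip hM).mp (hc v hv)).imp_right And.left) hcu
    · induction e using Sym2.ind with
      | _ a b =>
        exact hasPM_deleteEdges_iff.mpr ⟨hM.mate, hM.mate_involutive, hM.adj_mate,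
          fun h => heM (h ▸ hM.mate_mem a)⟩

/-- `G` is robust iff every strongly connected component of the auxiliary digraph
`D(G, M)` on `U` contains at least two vertices. -/
theorem robust_iff_scc_nontrivial
    {V : Type*} [Fintype V] [DecidableEq V] (G : SimpleGraph V) (U W : Set V)
    (hbip : IsBipartitionOf G U W) (M : Set (Sym2 V)) (hM : IsPMSet G M) :
    Robust G ↔
      ∀ u ∈ U, ∃ u' ∈ U, u' ≠ u ∧
        Relation.ReflTransGen (auxArc G M U W) u u' ∧
        Relation.ReflTransGen (auxArc G M U W) u' u :=
  robust_iff_scc_nontrivial_general G U W hbip M hM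
end

section
/- For any two perfect matchings M and M' of a bipartite graph G, the condensations (DAGs of strongly connected components) of the auxiliary digraphs D(G, M) and D(G, M') are isomorphic as directed graphs. -/
open SimpleGraph

variable {V : Type*}

/-- The strongly connected components of the digraph given by the relation `r`,
restricted to the vertex set `U`. -/
def sccs (r : V → V → Prop) (U : Set V) : Set (Set V) :=
  {C | ∃ u ∈ U, C = {v | Relation.ReflTransGen r u v ∧ Relation.ReflTransGen r v u}}

/-- The arc relation of the condensation: there is an arc between two distinct strongly
connected components if there is an arc of the digraph between them. -/
def condArc (r : V → V → Prop) (C C' : Set V) : Prop :=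
  C ≠ C' ∧ ∃ x ∈ C, ∃ y ∈ C', r x y

/-!
Let `p`, `p'` be the partner maps of `M`, `M'` and `σ = p' ∘ p`, a permutation of `U`. For
`u ∈ U`, the vertex `w = p u` is adjacent to `u`, so either `σ u = u` or `σ u → u` is an arc of
`D(G, M')`. Going once around the cycle of `σ` through `u` shows that `u` and `σ u` lie in the
same strongly connected component of `D(G, M')`. An arc `u → u'` of `D(G, M)` through `w = p u`
becomes, in the same way, `σ u = u'` or an arc `σ u → u'` of `D(G, M')`. Hence both digraphs
have the same reachability relation, so the same strongly connected components, and an arc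
between two distinct components of one of them is matched by an arc of the other.
-/

open Relation Function Set

section Reachability

variable {α : Type*}

theorem reflTransGen_apply_of_injective [Finite α] {f : α → α} (hf : Injective f)
    {r : α → α → Prop} {s : Set α} (hs : MapsTo f s s)
    (hback : ∀ x ∈ s, ReflTransGen r (f x) x) {x : α} (hx : x ∈ s) :
    ReflTransGen r x (f x) := by
  have hiter : ∀ n, ∀ y ∈ s, ReflTransGen r (f^[n] y) y := by
    intro n
    induction n with
    | zero => exact fun _ _ => .refl
    | succ n ih =>
      intro y hy
      rw [iterate_succ_apply]
      exact (ih _ (hs hy)).trans (hback y hy)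
  obtain ⟨n, hn, hperiodic⟩ := hf.mem_periodicPts x
  obtain ⟨m, rfl⟩ := Nat.exists_eq_succ_of_ne_zero hn.ne'
  simpa only [← iterate_succ_apply, hperiodic.eq] using hiter m (f x) (hs hx)

theorem sccs_congr {r r' : α → α → Prop} (h : ReflTransGen r = ReflTransGen r') (U : Set α) :
    sccs r U = sccs r' U := by
  rw [sccs, sccs, h]

theorem mem_of_mem_sccs {r : α → α → Prop} {U C : Set α} (hC : C ∈ sccs r U) {x z : α}
    (hx : x ∈ C) (hxz : ReflTransGen r x z) (hzx : ReflTransGen r z x) : z ∈ C := by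
  obtain ⟨u, -, rfl⟩ := hC
  exact ⟨hx.1.trans hxz, hzx.trans hx.2⟩

theorem eq_of_mem_sccs {r : α → α → Prop} {U C C' : Set α} (hC : C ∈ sccs r U)
    (hC' : C' ∈ sccs r U) {y : α} (hyC : y ∈ C) (hyC' : y ∈ C') : C = C' := by
  obtain ⟨u, -, rfl⟩ := hC
  obtain ⟨u', -, rfl⟩ := hC'
  ext v
  exact ⟨fun hv => ⟨hyC'.1.trans (hyC.2.trans hv.1), hv.2.trans (hyC.1.trans hyC'.2)⟩,
    fun hv => ⟨hyC.1.trans (hyC'.2.trans hv.1), hv.2.trans (hyC'.1.trans hyC.2)⟩⟩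

theorem condArc_of_reroute {r r' : α → α → Prop} {U : Set α}
    (hrt : ReflTransGen r = ReflTransGen r')
    (hreroute : ∀ x y, r x y → ∃ z, ReflTransGen r' x z ∧ ReflTransGen r' z x ∧
      (z = y ∨ r' z y))
    {C C' : Set α} (hC : C ∈ sccs r U) (hC' : C' ∈ sccs r U) (h : condArc r C C') :
    condArc r' C C' := by
  obtain ⟨hne, x, hx, y, hy, hxy⟩ := h
  obtain ⟨z, hxz, hzx, rfl | hzy⟩ := hreroute x y hxy
  · exact absurd (eq_of_mem_sccs hC hC' (mem_of_mem_sccs hC hx (hrt ▸ hxz) (hrt ▸ hzx)) hy) hne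
  · exact ⟨hne, z, mem_of_mem_sccs hC hx (hrt ▸ hxz) (hrt ▸ hzx), y, hy, hzy⟩

end Reachability

section Partner

variable {V : Type*} {M : Set (Sym2 V)}

noncomputable def partner (hM : ∀ v : V, ∃! e, e ∈ M ∧ v ∈ e) (v : V) : V :=
  Sym2.Mem.other (hM v).exists.choose_spec.2

theorem partner_mem (hM : ∀ v : V, ∃! e, e ∈ M ∧ v ∈ e) (v : V) : s(v, partner hM v) ∈ M := by
  have h := (hM v).exists.choose_spec
  rw [partner, Sym2.other_spec h.2]
  exact h.1

theorem partner_eq_of_mem (hM : ∀ v : V, ∃! e, e ∈ M ∧ v ∈ e) {v w : V} (h : s(v, w) ∈ M) :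
    partner hM v = w :=
  Sym2.congr_right.mp <|
    (hM v).unique ⟨partner_mem hM v, Sym2.mem_mk_left _ _⟩ ⟨h, Sym2.mem_mk_left _ _⟩

theorem partner_involutive (hM : ∀ v : V, ∃! e, e ∈ M ∧ v ∈ e) : Involutive (partner hM) :=
  fun v => partner_eq_of_mem hM (Sym2.eq_swap ▸ partner_mem hM v)

end Partner

section AuxDigraph

variable {V : Type*} {G : SimpleGraph V} {U W : Set V} {M M' : Set (Sym2 V)}

theorem mapsTo_partner_left_right (hbip : IsBipartitionOf G U W) (hM : IsPMSet G M) :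
    MapsTo (partner hM.2) U W :=
  fun _ hu => (hbip.2 (hM.1 (partner_mem hM.2 _))).mp hu

theorem mapsTo_partner_right_left (hbip : IsBipartitionOf G U W) (hM : IsPMSet G M) :
    MapsTo (partner hM.2) W U :=
  fun _ hw => (hbip.2 (G.adj_symm (hM.1 (partner_mem hM.2 _)))).mpr hw

theorem partner_eq_or_auxArc (hbip : IsBipartitionOf G U W) (hM : IsPMSet G M) {w u : V}
    (hw : w ∈ W) (hu : u ∈ U) (hwu : G.Adj w u) :
    partner hM.2 w = u ∨ auxArc G M U W (partner hM.2 w) u := by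
  by_cases hwuM : s(w, u) ∈ M
  · exact .inl (partner_eq_of_mem hM.2 hwuM)
  · exact .inr ⟨mapsTo_partner_right_left hbip hM hw, hu, w, hw,
      Sym2.eq_swap ▸ partner_mem hM.2 w, hwu, hwuM⟩

theorem reflTransGen_auxArc_partner_partner_self (hbip : IsBipartitionOf G U W)
    (hM : IsPMSet G M) (hM' : IsPMSet G M') {u : V} (hu : u ∈ U) :
    ReflTransGen (auxArc G M' U W) (partner hM'.2 (partner hM.2 u)) u := by
  rcases partner_eq_or_auxArc hbip hM' (mapsTo_partner_left_right hbip hM hu) hu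
      (G.adj_symm (hM.1 (partner_mem hM.2 u))) with h | h
  · rw [h]
  · exact .single h

theorem reflTransGen_auxArc_self_partner_partner [Finite V] (hbip : IsBipartitionOf G U W)
    (hM : IsPMSet G M) (hM' : IsPMSet G M') {u : V} (hu : u ∈ U) :
    ReflTransGen (auxArc G M' U W) u (partner hM'.2 (partner hM.2 u)) :=
  reflTransGen_apply_of_injective (f := partner hM'.2 ∘ partner hM.2)
    ((partner_involutive hM'.2).injective.comp (partner_involutive hM.2).injective)
    ((mapsTo_partner_right_left hbip hM').comp (mapsTo_partner_left_right hbip hM))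
    (fun _ => reflTransGen_auxArc_partner_partner_self hbip hM hM') hu

theorem auxArc_reroute [Finite V] (hbip : IsBipartitionOf G U W) (hM : IsPMSet G M)
    (hM' : IsPMSet G M') {u u' : V} (h : auxArc G M U W u u') :
    ∃ z, ReflTransGen (auxArc G M' U W) u z ∧ ReflTransGen (auxArc G M' U W) z u ∧
      (z = u' ∨ auxArc G M' U W z u') := by
  obtain ⟨hu, hu', w, hw, huwM, hwu', -⟩ := h
  obtain rfl := partner_eq_of_mem hM.2 huwM
  exact ⟨_, reflTransGen_auxArc_self_partner_partner hbip hM hM' hu,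
    reflTransGen_auxArc_partner_partner_self hbip hM hM' hu,
    partner_eq_or_auxArc hbip hM' hw hu' hwu'⟩

theorem reflTransGen_auxArc_le [Finite V] (hbip : IsBipartitionOf G U W) (hM : IsPMSet G M)
    (hM' : IsPMSet G M') : ReflTransGen (auxArc G M U W) ≤ ReflTransGen (auxArc G M' U W) :=
  reflTransGen_closed fun _ _ h => by
    obtain ⟨z, huz, -, rfl | hzu'⟩ := auxArc_reroute hbip hM hM' h
    exacts [huz, huz.tail hzu']

theorem reflTransGen_auxArc_eq [Finite V] (hbip : IsBipartitionOf G U W) (hM : IsPMSet G M)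
    (hM' : IsPMSet G M') : ReflTransGen (auxArc G M U W) = ReflTransGen (auxArc G M' U W) :=
  le_antisymm (reflTransGen_auxArc_le hbip hM hM') (reflTransGen_auxArc_le hbip hM' hM)

end AuxDigraph

theorem condensation_isomorphic_of_perfect_matchings_general
    {V : Type*} [Fintype V] (G : SimpleGraph V) (U W : Set V)
    (hbip : IsBipartitionOf G U W) (M M' : Set (Sym2 V))
    (hM : IsPMSet G M) (hM' : IsPMSet G M') :
    ∃ φ : {C // C ∈ sccs (auxArc G M U W) U} → {C // C ∈ sccs (auxArc G M' U W) U},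
      Function.Bijective φ ∧
      ∀ C C' : {C // C ∈ sccs (auxArc G M U W) U},
        condArc (auxArc G M U W) C.1 C'.1 ↔ condArc (auxArc G M' U W) (φ C).1 (φ C').1 := by
  have hrt := reflTransGen_auxArc_eq hbip hM hM'
  have hsccs := sccs_congr hrt U
  refine ⟨Equiv.setCongr hsccs, (Equiv.setCongr hsccs).bijective, fun C C' => ⟨?_, ?_⟩⟩
  · exact condArc_of_reroute hrt (fun _ _ => auxArc_reroute hbip hM hM') C.2 C'.2
  · exact condArc_of_reroute hrt.symm (fun _ _ => auxArc_reroute hbip hM' hM)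
      (Equiv.setCongr hsccs C).2 (Equiv.setCongr hsccs C').2

/-- For any two perfect matchings `M`, `M'` of a bipartite graph `G`, the condensations of
the auxiliary digraphs `D(G, M)` and `D(G, M')` are isomorphic digraphs. -/
theorem condensation_isomorphic_of_perfect_matchings
    {V : Type*} [Fintype V] [DecidableEq V] (G : SimpleGraph V) (U W : Set V)
    (hbip : IsBipartitionOf G U W) (M M' : Set (Sym2 V))
    (hM : IsPMSet G M) (hM' : IsPMSet G M') :
    ∃ φ : {C // C ∈ sccs (auxArc G M U W) U} → {C // C ∈ sccs (auxArc G M' U W) U},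
      Function.Bijective φ ∧
      ∀ C C' : {C // C ∈ sccs (auxArc G M U W) U},
        condArc (auxArc G M U W) C.1 C'.1 ↔ condArc (auxArc G M' U W) (φ C).1 (φ C').1 :=
  condensation_isomorphic_of_perfect_matchings_general G U W hbip M M' hM hM'
end

section
/- Let D be a finite digraph that is not strongly connected (or has at least 2 vertices). The minimum number γ(D) of arcs whose addition makes D strongly connected equals max{ s(D), t(D) }, where s(D) is the number of source components and t(D) is the number of sink components of the condensation of D, provided D is not already strongly connected. -/
/-!
A source component can only be entered through a new arc, so the new arcs have pairwise distinct
heads in the source components, and likewise distinct tails in the sink components: this is the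
lower bound. For the upper bound choose a vertex in every source and in every sink component. If
there is a single source or a single sink, arcs from every chosen sink to every chosen source
suffice. Otherwise there is a chosen sink `t` and a chosen source `s` such that after adding the
arc `t → s` the other chosen sources still reach everything and the other chosen sinks are still
reached from everything; this removes one source and one sink, and one inducts.
-/

/-- The strongly connected components of the digraph given by the relation `r`. -/
def sccSet {V : Type*} (r : V → V → Prop) : Set (Set V) :=
  {C | ∃ u, C = {v | Relation.ReflTransGen r u v ∧ Relation.ReflTransGen r v u}}

/-- A source component: a strongly connected component with no incoming arc. -/
def IsSourceComp {V : Type*} (r : V → V → Prop) (C : Set V) : Prop :=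
  C ∈ sccSet r ∧ ∀ x ∈ C, ∀ y, r y x → y ∈ C

/-- A sink component: a strongly connected component with no outgoing arc. -/
def IsSinkComp {V : Type*} (r : V → V → Prop) (C : Set V) : Prop :=
  C ∈ sccSet r ∧ ∀ x ∈ C, ∀ y, r x y → y ∈ C

namespace EswaranTarjan

open Relation Function

variable {V : Type*} (r : V → V → Prop)

def scc (u : V) : Set V := {v | ReflTransGen r u v ∧ ReflTransGen r v u}

def withArcs (L : Finset (V × V)) (a b : V) : Prop := r a b ∨ (a, b) ∈ L

def IsSourceCover (S : Finset V) : Prop := ∀ x, ∃ s ∈ S, ReflTransGen r s x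

def IsSinkCover (T : Finset V) : Prop := ∀ x, ∃ t ∈ T, ReflTransGen r x t

variable {r}

lemma mem_scc_self (u : V) : u ∈ scc r u := ⟨.refl, .refl⟩

lemma scc_mem_sccSet (u : V) : scc r u ∈ sccSet r := ⟨u, rfl⟩

lemma scc_eq_of_mem {u v : V} (h : v ∈ scc r u) : scc r v = scc r u := by
  obtain ⟨huv, hvu⟩ := h
  ext w
  exact ⟨fun ⟨a, b⟩ => ⟨huv.trans a, b.trans hvu⟩, fun ⟨a, b⟩ => ⟨hvu.trans a, b.trans huv⟩⟩

lemma eq_scc_of_mem {C : Set V} (hC : C ∈ sccSet r) {v : V} (hv : v ∈ C) : C = scc r v := by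
  obtain ⟨u, rfl⟩ := hC
  exact (scc_eq_of_mem hv).symm

lemma scc_ne_univ (hnsc : ¬ ∀ x y, ReflTransGen r x y) (u : V) : scc r u ≠ Set.univ := by
  intro h
  refine hnsc fun x y => ?_
  have hx : x ∈ scc r u := h ▸ Set.mem_univ x
  have hy : y ∈ scc r u := h ▸ Set.mem_univ y
  exact hx.2.trans hy.1

lemma scc_swap (u : V) : scc (swap r) u = scc r u := by
  ext v
  simp only [scc, Set.mem_ofPred_eq, reflTransGen_swap, and_comm]

lemma isSourceComp_swap {C : Set V} : IsSourceComp (swap r) C ↔ IsSinkComp r C := by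
  have hscc : sccSet (swap r) = sccSet r := by
    ext C
    simp only [sccSet, Set.mem_ofPred_eq]
    exact exists_congr fun u => by rw [← scc, ← scc, scc_swap]
  simp only [IsSourceComp, IsSinkComp, hscc, swap]

lemma withArcs_swap (L : Finset (V × V)) :
    withArcs (swap r) (L.map (Equiv.prodComm V V).toEmbedding) = swap (withArcs r L) := by
  ext a b
  simp [withArcs, swap]

lemma le_withArcs (L : Finset (V × V)) : r ≤ withArcs r L := fun _ _ => Or.inl

lemma withArcs_mono {L L' : Finset (V × V)} (h : L ⊆ L') : withArcs r L ≤ withArcs r L' :=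
  fun _ _ => Or.imp_right fun hab => h hab

lemma withArcs_withArcs_singleton [DecidableEq V] (e : V × V) (L : Finset (V × V)) :
    withArcs (withArcs r {e}) L = withArcs r (insert e L) := by
  ext a b
  simp only [withArcs, Finset.mem_singleton, Finset.mem_insert, or_assoc]

lemma exists_arc_mem_of_isSourceComp (hnsc : ¬ ∀ x y, ReflTransGen r x y)
    {L : Finset (V × V)} (hL : ∀ x y, ReflTransGen (withArcs r L) x y) {C : Set V}
    (hC : IsSourceComp r C) : ∃ e ∈ L, e.2 ∈ C := by
  obtain ⟨⟨u, rfl⟩, hclosed⟩ := hC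
  by_contra! hnone
  obtain ⟨x, hx⟩ := (Set.ne_univ_iff_exists_notMem _).mp (scc_ne_univ hnsc u)
  refine hx ((hL x u).head_induction_on (motive := fun a _ => a ∈ scc r u) (mem_scc_self u) ?_)
  rintro a c (hac | hac) - hc
  · exact hclosed c hc a hac
  · exact absurd hc (hnone (a, c) hac)

lemma ncard_sourceComps_le (hnsc : ¬ ∀ x y, ReflTransGen r x y) {L : Finset (V × V)}
    (hL : ∀ x y, ReflTransGen (withArcs r L) x y) :
    {C | IsSourceComp r C}.ncard ≤ L.card := by
  have hsub : {C | IsSourceComp r C} ⊆ (fun e : V × V => scc r e.2) '' L := by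
    intro C hC
    obtain ⟨e, he, heC⟩ := exists_arc_mem_of_isSourceComp hnsc hL hC
    exact ⟨e, he, (eq_scc_of_mem hC.1 heC).symm⟩
  calc {C | IsSourceComp r C}.ncard ≤ ((fun e : V × V => scc r e.2) '' L).ncard :=
        Set.ncard_le_ncard hsub (L.finite_toSet.image _)
    _ ≤ (L : Set (V × V)).ncard := Set.ncard_image_le L.finite_toSet
    _ = L.card := Set.ncard_coe_finset L

lemma ncard_sinkComps_le (hnsc : ¬ ∀ x y, ReflTransGen r x y) {L : Finset (V × V)}
    (hL : ∀ x y, ReflTransGen (withArcs r L) x y) :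
    {C | IsSinkComp r C}.ncard ≤ L.card := by
  have hnsc' : ¬ ∀ x y, ReflTransGen (swap r) x y := fun h =>
    hnsc fun x y => reflTransGen_swap.mp (h y x)
  have hL' : ∀ x y, ReflTransGen (withArcs (swap r) (L.map (Equiv.prodComm V V).toEmbedding)) x y :=
    fun x y => by
      rw [withArcs_swap]
      exact reflTransGen_swap.mpr (hL y x)
  simpa only [isSourceComp_swap, Finset.card_map] using ncard_sourceComps_le hnsc' hL'

/-- A vertex with a minimal set of ancestors spans a source component: each of its ancestors has
the same ancestors, hence is also one of its descendants. -/
lemma exists_isSourceComp_scc_reflTransGen [Finite V] (x : V) :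
    ∃ u, IsSourceComp r (scc r u) ∧ ReflTransGen r u x := by
  obtain ⟨u, hux, hmin⟩ := exists_minimalFor_of_wellFoundedLT
    (fun u => ReflTransGen r u x) (fun u => {y | ReflTransGen r y u}) ⟨x, .refl⟩
  refine ⟨u, ⟨scc_mem_sccSet u, fun z hz y hyz => ?_⟩, hux⟩
  have hyu : ReflTransGen r y u := (ReflTransGen.single hyz).trans hz.2
  have hanc : {w | ReflTransGen r w u} ⊆ {w | ReflTransGen r w y} :=
    hmin (hyu.trans hux) fun w hwy => hwy.trans hyu
  exact ⟨hanc (show ReflTransGen r u u from .refl), hyu⟩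

lemma exists_isSinkComp_scc_reflTransGen [Finite V] (x : V) :
    ∃ u, IsSinkComp r (scc r u) ∧ ReflTransGen r x u := by
  simpa only [isSourceComp_swap, scc_swap, reflTransGen_swap] using
    exists_isSourceComp_scc_reflTransGen (r := swap r) x

lemma exists_finset_card_eq_ncard_of_subset_sccSet [Finite V] {𝒞 : Set (Set V)}
    (h𝒞 : 𝒞 ⊆ sccSet r) :
    ∃ S : Finset V, S.card = 𝒞.ncard ∧ ∀ u, scc r u ∈ 𝒞 → ∃ s ∈ S, s ∈ scc r u := by
  obtain ⟨S, -, hbij⟩ := Set.exists_subset_bijOn {v | scc r v ∈ 𝒞} (scc r)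
  have himage : scc r '' {v | scc r v ∈ 𝒞} = 𝒞 := by
    refine subset_antisymm (Set.image_subset_iff.mpr fun _ => id) fun C hC => ?_
    obtain ⟨u, rfl⟩ := h𝒞 hC
    exact ⟨u, hC, rfl⟩
  rw [himage] at hbij
  refine ⟨S.toFinite.toFinset, ?_, fun u hu => ?_⟩
  · rw [← Set.ncard_eq_toFinset_card _, hbij.ncard_eq]
  · obtain ⟨s, hs, hsu⟩ := hbij.surjOn hu
    exact ⟨s, S.toFinite.mem_toFinset.mpr hs, hsu ▸ mem_scc_self s⟩

lemma exists_isSourceCover_card_eq_ncard_sourceComps [Finite V] :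
    ∃ S : Finset V, S.card = {C | IsSourceComp r C}.ncard ∧ IsSourceCover r S := by
  obtain ⟨S, hcard, hrep⟩ := exists_finset_card_eq_ncard_of_subset_sccSet (r := r)
    (𝒞 := {C | IsSourceComp r C}) fun _ hC => hC.1
  refine ⟨S, hcard, fun x => ?_⟩
  obtain ⟨u, hu, hux⟩ := exists_isSourceComp_scc_reflTransGen x
  obtain ⟨s, hs, hsu⟩ := hrep u hu
  exact ⟨s, hs, hsu.2.trans hux⟩

lemma exists_isSinkCover_card_eq_ncard_sinkComps [Finite V] :
    ∃ T : Finset V, T.card = {C | IsSinkComp r C}.ncard ∧ IsSinkCover r T := by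
  simpa only [isSourceComp_swap, IsSourceCover, IsSinkCover, reflTransGen_swap] using
    exists_isSourceCover_card_eq_ncard_sourceComps (r := swap r)

lemma reflTransGen_withArcs {L : Finset (V × V)} {a b : V} (h : ReflTransGen r a b) :
    ReflTransGen (withArcs r L) a b :=
  ReflTransGen.mono (le_withArcs L) _ _ h

lemma reflTransGen_withArcs_of_mem {L : Finset (V × V)} {a b : V} (h : (a, b) ∈ L) :
    ReflTransGen (withArcs r L) a b :=
  .single (Or.inr h)

lemma reflTransGen_withArcs_product {S T : Finset V} (hS : IsSourceCover r S)
    (hT : IsSinkCover r T) (x y : V) : ReflTransGen (withArcs r (T ×ˢ S)) x y := by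
  obtain ⟨t, ht, hxt⟩ := hT x
  obtain ⟨s, hs, hsy⟩ := hS y
  exact ((reflTransGen_withArcs hxt).trans
    (reflTransGen_withArcs_of_mem (Finset.mk_mem_product ht hs))).trans (reflTransGen_withArcs hsy)

section erase

variable [DecidableEq V] {S T : Finset V} {s t s' t' : V}

lemma IsSourceCover.erase_withArcs (hS : IsSourceCover r S) (hs' : s' ∈ S.erase s)
    (hs't : ReflTransGen r s' t) : IsSourceCover (withArcs r {(t, s)}) (S.erase s) := by
  intro x
  obtain ⟨s₁, hs₁, hs₁x⟩ := hS x
  by_cases h : s₁ = s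
  · subst h
    exact ⟨s', hs', ((reflTransGen_withArcs hs't).trans
      (reflTransGen_withArcs_of_mem (Finset.mem_singleton_self _))).trans
        (reflTransGen_withArcs hs₁x)⟩
  · exact ⟨s₁, Finset.mem_erase.mpr ⟨h, hs₁⟩, reflTransGen_withArcs hs₁x⟩

lemma IsSinkCover.erase_withArcs (hT : IsSinkCover r T) (ht' : t' ∈ T.erase t)
    (hst' : ReflTransGen r s t') : IsSinkCover (withArcs r {(t, s)}) (T.erase t) := by
  intro x
  obtain ⟨t₁, ht₁, hxt₁⟩ := hT x
  by_cases h : t₁ = t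
  · subst h
    exact ⟨t', ht', ((reflTransGen_withArcs hxt₁).trans
      (reflTransGen_withArcs_of_mem (Finset.mem_singleton_self _))).trans
        (reflTransGen_withArcs hst')⟩
  · exact ⟨t₁, Finset.mem_erase.mpr ⟨h, ht₁⟩, reflTransGen_withArcs hxt₁⟩

/-- Joining `t` to `s` loses the source `s` and the sink `t` as soon as `t` is reached from another
source and `s` reaches another sink; such a pair exists: take `s` not reaching `t` if there is
one, and any pair otherwise. -/
lemma exists_mem_erase_reflTransGen (hS : IsSourceCover r S) (hT : IsSinkCover r T)
    (hS₂ : 1 < S.card) (hT₂ : 1 < T.card) :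
    ∃ s ∈ S, ∃ t ∈ T, (∃ s' ∈ S.erase s, ReflTransGen r s' t) ∧
      ∃ t' ∈ T.erase t, ReflTransGen r s t' := by
  by_cases h : ∃ s ∈ S, ∃ t ∈ T, ¬ ReflTransGen r s t
  · obtain ⟨s, hs, t, ht, hst⟩ := h
    obtain ⟨s', hs', hs't⟩ := hS t
    obtain ⟨t', ht', hst'⟩ := hT s
    refine ⟨s, hs, t, ht, ⟨s', Finset.mem_erase.mpr ⟨?_, hs'⟩, hs't⟩,
      t', Finset.mem_erase.mpr ⟨?_, ht'⟩, hst'⟩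
    · rintro rfl; exact hst hs't
    · rintro rfl; exact hst hst'
  · push Not at h
    obtain ⟨s, hs⟩ := Finset.card_pos.mp (zero_lt_one.trans hS₂)
    obtain ⟨t, ht⟩ := Finset.card_pos.mp (zero_lt_one.trans hT₂)
    obtain ⟨s', hs', hs's⟩ := Finset.exists_mem_ne hS₂ s
    obtain ⟨t', ht', ht't⟩ := Finset.exists_mem_ne hT₂ t
    exact ⟨s, hs, t, ht, ⟨s', Finset.mem_erase.mpr ⟨hs's, hs'⟩, h s' hs' t ht⟩,
      t', Finset.mem_erase.mpr ⟨ht't, ht'⟩, h s hs t' ht'⟩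

end erase

theorem exists_card_le_max_of_isSourceCover_of_isSinkCover {r : V → V → Prop} {S T : Finset V}
    (hS : IsSourceCover r S) (hT : IsSinkCover r T) :
    ∃ L : Finset (V × V), L.card ≤ max S.card T.card ∧
      ∀ x y, ReflTransGen (withArcs r L) x y := by
  classical
  by_cases hsmall : S.card ≤ 1 ∨ T.card ≤ 1
  · refine ⟨T ×ˢ S, ?_, reflTransGen_withArcs_product hS hT⟩
    rw [Finset.card_product]
    rcases hsmall with h | h <;> nlinarith [le_max_left S.card T.card, le_max_right S.card T.card]
  push Not at hsmall
  obtain ⟨s, hs, t, ht, ⟨s', hs', hs't⟩, t', ht', hst'⟩ :=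
    exists_mem_erase_reflTransGen hS hT hsmall.1 hsmall.2
  obtain ⟨L, hLcard, hL⟩ := exists_card_le_max_of_isSourceCover_of_isSinkCover
    (hS.erase_withArcs hs' hs't) (hT.erase_withArcs ht' hst')
  refine ⟨insert (t, s) L, ?_, by rwa [← withArcs_withArcs_singleton]⟩
  have := Finset.card_insert_le (t, s) L
  rw [Finset.card_erase_of_mem hs, Finset.card_erase_of_mem ht] at hLcard
  omega
termination_by S.card
decreasing_by classical exact Finset.card_erase_lt_of_mem hs

end EswaranTarjan

open EswaranTarjan

theorem eswaran_tarjan_general {V : Type*} [Fintype V] (r : V → V → Prop)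
    (hnsc : ¬ ∀ x y : V, Relation.ReflTransGen r x y) :
    IsLeast {n : ℕ | ∃ L : Finset (V × V), L.card = n ∧
        ∀ x y : V, Relation.ReflTransGen (fun a b => r a b ∨ (a, b) ∈ L) x y}
      (max (Set.ncard {C : Set V | IsSourceComp r C})
           (Set.ncard {C : Set V | IsSinkComp r C})) := by
  refine ⟨?_, fun n ⟨L, hLcard, hL⟩ => hLcard ▸ max_le (ncard_sourceComps_le hnsc hL)
    (ncard_sinkComps_le hnsc hL)⟩
  obtain ⟨S, hScard, hS⟩ := exists_isSourceCover_card_eq_ncard_sourceComps (r := r)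
  obtain ⟨T, hTcard, hT⟩ := exists_isSinkCover_card_eq_ncard_sinkComps (r := r)
  obtain ⟨L₀, hL₀card, hL₀⟩ := exists_card_le_max_of_isSourceCover_of_isSinkCover hS hT
  have hle : max S.card T.card ≤ Fintype.card (V × V) := by
    rw [Fintype.card_prod]
    exact max_le (S.card_le_univ.trans (Nat.le_mul_self _))
      (T.card_le_univ.trans (Nat.le_mul_self _))
  obtain ⟨L, hL₀L, hLcard⟩ := Finset.exists_superset_card_eq hL₀card hle
  refine ⟨L, by rw [hLcard, hScard, hTcard], fun x y => ?_⟩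
  exact Relation.ReflTransGen.mono (withArcs_mono hL₀L) _ _ (hL₀ x y)

/-- Eswaran–Tarjan: for a finite digraph that is not strongly connected, the minimum
number of arcs whose addition makes it strongly connected equals the maximum of the
number of source components and the number of sink components of its condensation. -/
theorem eswaran_tarjan {V : Type*} [Fintype V] [DecidableEq V] (r : V → V → Prop)
    (hnsc : ¬ ∀ x y : V, Relation.ReflTransGen r x y) :
    IsLeast {n : ℕ | ∃ L : Finset (V × V), L.card = n ∧
        ∀ x y : V, Relation.ReflTransGen (fun a b => r a b ∨ (a, b) ∈ L) x y}
      (max (Set.ncard {C : Set V | IsSourceComp r C})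
           (Set.ncard {C : Set V | IsSinkComp r C})) :=
  eswaran_tarjan_general r hnsc
end

section
/- Let D be a weakly connected acyclic digraph with at least one arc. If the underlying undirected graph of D contains no induced cycle of length at least 6, then the bipartite 'flattened' graph on sources and sinks of D (with an edge st whenever sink t is reachable from source s) also contains no induced cycle of length at least 6. -/
/-- `x` is a source of the digraph `r`: no incoming arc. -/
def IsSource {V : Type*} (r : V → V → Prop) (x : V) : Prop := ∀ y, ¬ r y x

/-- `x` is a sink of the digraph `r`: no outgoing arc. -/
def IsSink {V : Type*} (r : V → V → Prop) (x : V) : Prop := ∀ y, ¬ r x y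

/-- The flattened graph of an acyclic digraph `r`: the undirected bipartite graph on
sources and sinks with an edge `st` whenever the sink `t` is reachable from the source `s`. -/
def flattened {V : Type*} (r : V → V → Prop) : SimpleGraph V :=
  SimpleGraph.fromRel (fun s t => IsSource r s ∧ IsSink r t ∧ Relation.ReflTransGen r s t)

/-- `H` has an induced (chordless) cycle of length at least `n`. -/
def HasInducedCycleGe {V : Type*} (H : SimpleGraph V) (n : ℕ) : Prop :=
  ∃ (v : V) (c : H.Walk v v), c.IsCycle ∧ n ≤ c.length ∧
    ∀ x ∈ c.support, ∀ y ∈ c.support, H.Adj x y → s(x, y) ∈ c.edges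

namespace FlatChordal

variable {V : Type*}

/-- A directed chain of length `n` from `x` to `y` realized by `f`. -/
def IsChain (r : V → V → Prop) (x y : V) (n : ℕ) (f : ℕ → V) : Prop :=
  f 0 = x ∧ f n = y ∧ ∀ i < n, r (f i) (f (i + 1))

/-- Directed distance: least length of a chain. -/
noncomputable def dd (r : V → V → Prop) (x y : V) : ℕ :=
  sInf {n | ∃ f, IsChain r x y n f}

variable {r : V → V → Prop}

lemma isChain_refl (x : V) : IsChain r x x 0 (fun _ => x) := ⟨rfl, rfl, by omega⟩

lemma isChain_single {x y : V} (h : r x y) :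
    IsChain r x y 1 (fun m => if m = 0 then x else y) := by
  refine ⟨rfl, rfl, ?_⟩
  intro i hi
  interval_cases i
  simpa using h

lemma IsChain.concat {x y z : V} {n m : ℕ} {f g : ℕ → V}
    (hf : IsChain r x y n f) (hg : IsChain r y z m g) :
    IsChain r x z (n + m) (fun p => if p < n then f p else g (p - n)) := by
  obtain ⟨hf0, hfn, hfs⟩ := hf
  obtain ⟨hg0, hgm, hgs⟩ := hg
  have key : ∀ p, (if p < n then f p else g (p - n)) = if p ≤ n then f p else g (p - n) := by
    intro p
    rcases lt_trichotomy p n with h | h | h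
    · simp [h, le_of_lt h]
    · subst h; simp [hfn, hg0]
    · simp [not_lt.2 (le_of_lt h), not_le.2 h]
  refine ⟨?_, ?_, ?_⟩
  · show (if 0 < n then f 0 else g (0 - n)) = x
    rcases Nat.eq_zero_or_pos n with h | h
    · subst h
      rw [if_neg (by omega), Nat.sub_zero, hg0, ← hfn, hf0]
    · rw [if_pos h, hf0]
  · show (if n + m < n then f (n+m) else g (n + m - n)) = z
    rw [key]
    rcases Nat.eq_zero_or_pos m with h | h
    · subst h
      rw [if_pos (by omega)]
      show f (n+0) = z
      rw [Nat.add_zero, hfn, ← hg0, hgm]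
    · rw [if_neg (by omega)]
      have e : n + m - n = m := by omega
      rw [e, hgm]
  · intro i hi
    show r (if i < n then f i else g (i - n)) (if i+1 < n then f (i+1) else g (i + 1 - n))
    rw [key, key]
    by_cases h2 : i + 1 ≤ n
    · rw [if_pos (by omega), if_pos h2]
      exact hfs i (by omega)
    · rw [if_neg h2]
      have hfg : (if i ≤ n then f i else g (i - n)) = g (i - n) := by
        rcases Nat.lt_or_ge n i with h4 | h4
        · rw [if_neg (by omega)]
        · have : i = n := by omega
          subst this
          rw [if_pos le_rfl, hfn, ← hg0]
          simp
      rw [hfg]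
      have := hgs (i - n) (by omega)
      have e : i - n + 1 = i + 1 - n := by omega
      rwa [e] at this

lemma reach_iff_chain {x y : V} :
    Relation.ReflTransGen r x y ↔ ∃ n f, IsChain r x y n f := by
  constructor
  · intro h
    induction h with
    | refl => exact ⟨0, _, isChain_refl x⟩
    | tail _ hr ih =>
      obtain ⟨n, f, hf⟩ := ih
      exact ⟨n + 1, _, hf.concat (isChain_single hr)⟩
  · rintro ⟨n, f, hf⟩
    induction n generalizing y with
    | zero =>
      obtain ⟨h0, hn, _⟩ := hf
      rw [← h0, ← hn]
    | succ n ih =>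
      obtain ⟨h0, hn, hs⟩ := hf
      have : Relation.ReflTransGen r x (f n) := ih ⟨h0, rfl, fun i hi => hs i (by omega)⟩
      exact this.tail (hn ▸ hs n (by omega))

lemma IsChain.reach {x y : V} {n : ℕ} {f : ℕ → V} (h : IsChain r x y n f) :
    Relation.ReflTransGen r x y := reach_iff_chain.2 ⟨n, f, h⟩

lemma dd_le {x y : V} {n : ℕ} {f : ℕ → V} (h : IsChain r x y n f) : dd r x y ≤ n :=
  Nat.sInf_le ⟨f, h⟩

lemma exists_min_chain {x y : V} (h : Relation.ReflTransGen r x y) :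
    ∃ f, IsChain r x y (dd r x y) f := by
  have hne : {n | ∃ f, IsChain r x y n f}.Nonempty := by
    obtain ⟨n, f, hf⟩ := reach_iff_chain.1 h
    exact ⟨n, f, hf⟩
  exact Nat.sInf_mem hne

lemma dd_arc {x y : V} (h : r x y) : dd r x y ≤ 1 := dd_le (isChain_single h)

lemma dd_self (x : V) : dd r x x = 0 := Nat.le_zero.1 (dd_le (isChain_refl x))

lemma dd_pos {x y : V} (h : Relation.ReflTransGen r x y) (hne : x ≠ y) : 1 ≤ dd r x y := by
  rcases Nat.eq_zero_or_pos (dd r x y) with h0 | h1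
  · obtain ⟨f, hf⟩ := exists_min_chain h
    rw [h0] at hf
    exact absurd (hf.1.symm.trans hf.2.1) hne
  · exact h1

lemma dd_triangle {x y z : V} (hxy : Relation.ReflTransGen r x y)
    (hyz : Relation.ReflTransGen r y z) : dd r x z ≤ dd r x y + dd r y z := by
  obtain ⟨f, hf⟩ := exists_min_chain hxy
  obtain ⟨g, hg⟩ := exists_min_chain hyz
  exact dd_le (hf.concat hg)

/-- extract the subchain between positions `i ≤ j ≤ n`. -/
lemma IsChain.sub {x y : V} {n : ℕ} {f : ℕ → V} (h : IsChain r x y n f)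
    {i j : ℕ} (hij : i ≤ j) (hj : j ≤ n) : IsChain r (f i) (f j) (j - i) (fun m => f (i + m)) := by
  refine ⟨by simp, by show f (i + (j - i)) = f j; rw [Nat.add_sub_cancel' hij], ?_⟩
  intro m hm
  have := h.2.2 (i + m) (by omega)
  show r (f (i + m)) (f (i + (m+1)))
  have e : i + (m+1) = i + m + 1 := by omega
  rw [e]
  exact this

lemma IsChain.reach_sub {x y : V} {n : ℕ} {f : ℕ → V} (h : IsChain r x y n f)
    {i j : ℕ} (hij : i ≤ j) (hj : j ≤ n) : Relation.ReflTransGen r (f i) (f j) :=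
  (h.sub hij hj).reach

section acyc
variable (hacyc : ∀ v, ¬ Relation.TransGen r v v)
include hacyc

lemma reach_antisymm {x y : V} (hxy : Relation.ReflTransGen r x y)
    (hyx : Relation.ReflTransGen r y x) : x = y := by
  by_contra hne
  rcases (Relation.reflTransGen_iff_eq_or_transGen.1 hxy) with h | h
  · exact hne h.symm
  · rcases (Relation.reflTransGen_iff_eq_or_transGen.1 hyx) with h2 | h2
    · exact hne h2
    · exact hacyc x (h.trans h2)

lemma not_reach_of_arc_rev {x y : V} (harc : r x y) (h : Relation.ReflTransGen r y x) : False := by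
  exact hacyc x (Relation.TransGen.head' harc h)

end acyc

/-- On a minimal chain, directed distances between points equal index differences. -/
lemma min_chain_dd {x y : V} {f : ℕ → V} (hf : IsChain r x y (dd r x y) f)
    {i j : ℕ} (hij : i ≤ j) (hj : j ≤ dd r x y) : dd r (f i) (f j) = j - i := by
  set n := dd r x y with hn
  have hle : dd r (f i) (f j) ≤ j - i := dd_le (hf.sub hij hj)
  rcases Nat.lt_or_ge (dd r (f i) (f j)) (j - i) with hlt | hge
  · exfalso
    obtain ⟨g, hg⟩ := exists_min_chain (hf.reach_sub hij hj)
    have h1 : IsChain r x (f i) i (fun m => f (0 + m)) := by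
      have := hf.sub (Nat.zero_le i) (le_trans hij hj)
      simpa [hf.1] using this
    have h2 : IsChain r (f j) y (n - j) (fun m => f (j + m)) := by
      have := hf.sub hj (le_refl n)
      simpa [hf.2.1] using this
    have := dd_le ((h1.concat hg).concat h2)
    omega
  · omega

lemma min_chain_inj {x y : V} {f : ℕ → V} (hf : IsChain r x y (dd r x y) f)
    {i j : ℕ} (hi : i ≤ dd r x y) (hj : j ≤ dd r x y) (hne : i ≠ j) : f i ≠ f j := by
  intro heq
  rcases Nat.lt_or_ge i j with h | h
  · have := min_chain_dd hf (le_of_lt h) hj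
    rw [heq, dd_self] at this
    omega
  · have := min_chain_dd hf (by omega : j ≤ i) hi
    rw [← heq, dd_self] at this
    omega

/-- The key "no chord within a leg" lemma: an arc between two points of a minimal
chain must go one step forward. -/
lemma min_chain_arc (hacyc : ∀ v, ¬ Relation.TransGen r v v)
    {x y : V} {f : ℕ → V} (hf : IsChain r x y (dd r x y) f)
    {i j : ℕ} (hi : i ≤ dd r x y) (hj : j ≤ dd r x y) (harc : r (f i) (f j)) : j = i + 1 := by
  rcases Nat.lt_or_ge i j with h | h
  · have := min_chain_dd hf (le_of_lt h) hj
    have h2 : dd r (f i) (f j) ≤ 1 := dd_arc harc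
    omega
  · exfalso
    exact not_reach_of_arc_rev hacyc harc (hf.reach_sub h hi)
section patterns

variable {k : ℕ}

lemma zmod_cast_ne_zero [NeZero k] (m : ℕ) (h1 : 0 < m) (h2 : m < k) : (m : ZMod k) ≠ 0 := by
  intro h
  have := (ZMod.natCast_eq_zero_iff m k).1 h
  have := Nat.le_of_dvd h1 this
  omega

lemma zmod_one_ne_zero [NeZero k] (hk : 3 ≤ k) : (1 : ZMod k) ≠ 0 := by
  have := zmod_cast_ne_zero (k := k) 1 (by omega) (by omega)
  simpa using this

lemma zmod_two_ne_zero [NeZero k] (hk : 3 ≤ k) : (2 : ZMod k) ≠ 0 := by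
  have := zmod_cast_ne_zero (k := k) 2 (by omega) (by omega)
  simpa using this

lemma zmod_succ_ne [NeZero k] (hk : 3 ≤ k) (i : ZMod k) : i + 1 ≠ i := by
  intro h
  exact zmod_one_ne_zero hk (by linear_combination h - (i:ZMod k) + 0)

lemma zmod_pred_ne [NeZero k] (hk : 3 ≤ k) (i : ZMod k) : i - 1 ≠ i := by
  intro h
  apply zmod_one_ne_zero hk
  linear_combination -h

lemma zmod_succ_ne_pred [NeZero k] (hk : 3 ≤ k) (i : ZMod k) : i + 1 ≠ i - 1 := by
  intro h
  apply zmod_two_ne_zero hk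
  linear_combination h

lemma zmod_sub_add_cancel (x : ZMod k) : x - 1 + 1 = x := by ring

/-- The cyclic pattern structure abstracting an induced cycle in the flattened graph. -/
structure Pat (r : V → V → Prop) (k : ℕ) where
  a : ZMod k → V
  b : ZMod k → V
  ne1 : ∀ i, a i ≠ b i
  ne2 : ∀ i, a (i + 1) ≠ b i
  re1 : ∀ i, Relation.ReflTransGen r (a i) (b i)
  re2 : ∀ i, Relation.ReflTransGen r (a (i + 1)) (b i)
  hab : ∀ i j, Relation.ReflTransGen r (a i) (b j) → j = i ∨ j = i - 1
  haa : ∀ i j, i ≠ j → ¬ Relation.ReflTransGen r (a i) (a j)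
  hbb : ∀ i j, i ≠ j → ¬ Relation.ReflTransGen r (b i) (b j)
  hba : ∀ i j, ¬ Relation.ReflTransGen r (b i) (a j)

variable {r : V → V → Prop}

lemma Pat.hab' (P : Pat r k) (i j : ZMod k)
    (h : Relation.ReflTransGen r (P.a j) (P.b i)) : j = i ∨ j = i + 1 := by
  rcases P.hab j i h with h1 | h1
  · exact Or.inl h1.symm
  · right
    rw [h1]
    ring

noncomputable def pterm (P : Pat r k) (j : ZMod k) : ℕ :=
  dd r (P.a j) (P.b j) + dd r (P.a (j + 1)) (P.b j)

noncomputable def pL [NeZero k] (P : Pat r k) : ℕ := ∑ j : ZMod k, pterm P j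

lemma pL_lt [NeZero k] (P Q : Pat r k) (hle : ∀ j, pterm Q j ≤ pterm P j)
    (j₀ : ZMod k) (hlt : pterm Q j₀ < pterm P j₀) : pL Q < pL P :=
  Finset.sum_lt_sum (fun j _ => hle j) ⟨j₀, Finset.mem_univ _, hlt⟩

section upd
variable [NeZero k] (hacyc : ∀ v, ¬ Relation.TransGen r v v) (hk : 3 ≤ k)
variable (P : Pat r k)

/-- Generic reduction: replace `b i` by a common reachability-descendant `v`. -/
def Pat.updB (i : ZMod k) (v : V)
    (h1 : Relation.ReflTransGen r (P.a i) v)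
    (h2 : Relation.ReflTransGen r (P.a (i + 1)) v)
    (h3 : Relation.ReflTransGen r v (P.b i))
    (hvb : v ≠ P.b i) : Pat r k := by
  have hva : v ≠ P.a i := fun h => P.haa (i+1) i (zmod_succ_ne hk i) (h ▸ h2)
  have hva' : v ≠ P.a (i+1) := fun h => P.haa i (i+1) (zmod_succ_ne hk i).symm (h ▸ h1)
  refine ⟨P.a, Function.update P.b i v, ?_, ?_, ?_, ?_, ?_, P.haa, ?_, ?_⟩
  · intro j
    by_cases hj : j = i
    · subst hj; rw [Function.update_self]; exact fun h => hva (h.symm)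
    · rw [Function.update_of_ne hj]; exact P.ne1 j
  · intro j
    by_cases hj : j = i
    · subst hj; rw [Function.update_self]; exact fun h => hva' (h.symm)
    · rw [Function.update_of_ne hj]; exact P.ne2 j
  · intro j
    by_cases hj : j = i
    · subst hj; rw [Function.update_self]; exact h1
    · rw [Function.update_of_ne hj]; exact P.re1 j
  · intro j
    by_cases hj : j = i
    · subst hj; rw [Function.update_self]; exact h2
    · rw [Function.update_of_ne hj]; exact P.re2 j
  · intro j l h
    by_cases hl : l = i
    · subst hl
      rw [Function.update_self] at h
      exact P.hab j l (h.trans h3)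
    · rw [Function.update_of_ne hl] at h
      exact P.hab j l h
  · intro j l hjl h
    by_cases hj : j = i <;> by_cases hl : l = i
    · subst hj; exact absurd hl.symm hjl
    · subst hj
      rw [Function.update_self, Function.update_of_ne hl] at h
      have c1 : Relation.ReflTransGen r (P.a j) (P.b l) := h1.trans h
      have c2 : Relation.ReflTransGen r (P.a (j+1)) (P.b l) := h2.trans h
      rcases P.hab j l c1 with e1 | e1
      · exact hl e1
      rcases P.hab (j+1) l c2 with e2 | e2
      · -- l = j - 1 and l = j + 1
        apply zmod_two_ne_zero hk
        linear_combination e1 - e2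
      · -- l = j - 1? no: e2 : l = (j+1) - 1 = j
        apply hl
        rw [e2]
        ring
    · subst hl
      rw [Function.update_of_ne hj, Function.update_self] at h
      exact P.hbb j l hjl (h.trans h3)
    · rw [Function.update_of_ne hj, Function.update_of_ne hl] at h
      exact P.hbb j l hjl h
  · intro j l
    by_cases hj : j = i
    · subst hj
      rw [Function.update_self]
      intro h
      have c1 : Relation.ReflTransGen r (P.a j) (P.a l) := h1.trans h
      by_cases hl : l = j
      · subst hl
        exact hva (reach_antisymm hacyc h1 h).symm
      · exact P.haa j l (fun e => hl e.symm) c1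
    · rw [Function.update_of_ne hj]
      exact P.hba j l

/-- Generic reduction: replace `a i` by a common reachability-ancestor-of-both-b's `u`. -/
def Pat.updA (i : ZMod k) (u : V)
    (h0 : Relation.ReflTransGen r (P.a i) u)
    (h1 : Relation.ReflTransGen r u (P.b i))
    (h2 : Relation.ReflTransGen r u (P.b (i - 1)))
    (hua : u ≠ P.a i) : Pat r k := by
  have hub : u ≠ P.b i := by
    intro h
    exact P.hbb i (i-1) (zmod_pred_ne hk i).symm (h ▸ h2)
  have hub' : u ≠ P.b (i-1) := by
    intro h
    exact P.hbb (i-1) i (zmod_pred_ne hk i) (h ▸ h1)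
  have hsp : i - 1 + 1 = i := by ring
  refine ⟨Function.update P.a i u, P.b, ?_, ?_, ?_, ?_, ?_, ?_, P.hbb, ?_⟩
  · intro j
    by_cases hj : j = i
    · subst hj; rw [Function.update_self]; exact hub
    · rw [Function.update_of_ne hj]; exact P.ne1 j
  · intro j
    by_cases hj : j + 1 = i
    · rw [hj, Function.update_self]
      have : j = i - 1 := by rw [← hj]; ring
      rw [this]; exact hub'
    · rw [Function.update_of_ne hj]; exact P.ne2 j
  · intro j
    by_cases hj : j = i
    · subst hj; rw [Function.update_self]; exact h1
    · rw [Function.update_of_ne hj]; exact P.re1 j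
  · intro j
    by_cases hj : j + 1 = i
    · rw [hj, Function.update_self]
      have : j = i - 1 := by rw [← hj]; ring
      rw [this]; exact h2
    · rw [Function.update_of_ne hj]; exact P.re2 j
  · intro j l h
    by_cases hj : j = i
    · subst hj
      rw [Function.update_self] at h
      exact P.hab j l (h0.trans h)
    · rw [Function.update_of_ne hj] at h
      exact P.hab j l h
  · intro j l hjl h
    by_cases hj : j = i <;> by_cases hl : l = i
    · subst hj; exact absurd hl.symm hjl
    · subst hj
      rw [Function.update_self, Function.update_of_ne hl] at h
      exact P.haa j l (fun e => hl e.symm) (h0.trans h)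
    · subst hl
      rw [Function.update_of_ne hj, Function.update_self] at h
      have c1 : Relation.ReflTransGen r (P.a j) (P.b l) := h.trans h1
      have c2 : Relation.ReflTransGen r (P.a j) (P.b (l-1)) := h.trans h2
      rcases P.hab j l c1 with e1 | e1
      · exact hjl e1.symm
      rcases P.hab j (l-1) c2 with e2 | e2
      · -- l - 1 = j and l = j - 1
        apply zmod_two_ne_zero hk
        linear_combination e1 - e2
      · -- l - 1 = j - 1 : then l = j
        apply hjl
        have h3' : l - 1 + 1 = j - 1 + 1 := by rw [e2]
        rw [zmod_sub_add_cancel, zmod_sub_add_cancel] at h3'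
        exact h3'.symm
    · rw [Function.update_of_ne hj, Function.update_of_ne hl] at h
      exact P.haa j l hjl h
  · intro j l
    by_cases hl : l = i
    · subst hl
      rw [Function.update_self]
      intro h
      have c1 : Relation.ReflTransGen r (P.b j) (P.b l) := h.trans h1
      by_cases hj : j = l
      · subst hj
        exact hub (reach_antisymm hacyc h h1).symm
      · exact P.hbb j l hj c1
    · rw [Function.update_of_ne hl]
      exact P.hba j l

lemma Pat.updB_a (i : ZMod k) (v : V) (h1 h2 h3) (hvb : v ≠ P.b i) :
    (P.updB hacyc hk i v h1 h2 h3 hvb).a = P.a := rfl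

lemma Pat.updB_b (i : ZMod k) (v : V) (h1 h2 h3) (hvb : v ≠ P.b i) :
    (P.updB hacyc hk i v h1 h2 h3 hvb).b = Function.update P.b i v := rfl

lemma Pat.updA_a (i : ZMod k) (u : V) (h0 h1 h2) (hua : u ≠ P.a i) :
    (P.updA hacyc hk i u h0 h1 h2 hua).a = Function.update P.a i u := rfl

lemma Pat.updA_b (i : ZMod k) (u : V) (h0 h1 h2) (hua : u ≠ P.a i) :
    (P.updA hacyc hk i u h0 h1 h2 hua).b = P.b := rfl

end upd
end patterns
section corners
variable {k : ℕ} {r : V → V → Prop} [NeZero k]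

lemma Pat.a_ne_a (P : Pat r k) (hk : 3 ≤ k) {i j : ZMod k} (hij : i ≠ j) : P.a i ≠ P.a j := by
  intro h
  have c1 : Relation.ReflTransGen r (P.a i) (P.b j) := h ▸ P.re1 j
  have c2 : Relation.ReflTransGen r (P.a j) (P.b i) := h ▸ P.re1 i
  rcases P.hab i j c1 with e1 | e1
  · exact hij e1.symm
  rcases P.hab j i c2 with e2 | e2
  · exact hij e2
  · apply zmod_two_ne_zero hk
    linear_combination e1 + e2

lemma Pat.b_ne_b (P : Pat r k) (hk : 3 ≤ k) {i j : ZMod k} (hij : i ≠ j) : P.b i ≠ P.b j := by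
  intro h
  have c1 : Relation.ReflTransGen r (P.a i) (P.b j) := h ▸ P.re1 i
  have c2 : Relation.ReflTransGen r (P.a j) (P.b i) := h.symm ▸ P.re1 j
  rcases P.hab i j c1 with e1 | e1
  · exact hij e1.symm
  rcases P.hab j i c2 with e2 | e2
  · exact hij e2
  · apply zmod_two_ne_zero hk
    linear_combination e1 + e2

lemma Pat.a_ne_b (P : Pat r k) (i j : ZMod k) : P.a i ≠ P.b j := by
  intro h
  by_cases hj : j = i
  · subst hj
    exact P.ne1 j h
  · exact P.hbb j i hj (h ▸ P.re1 i)

end corners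

section walkbuild

variable {G : SimpleGraph V}

def mkWalk (G : SimpleGraph V) (f : ℕ → V) :
    (n : ℕ) → (∀ i < n, G.Adj (f i) (f (i + 1))) → G.Walk (f 0) (f n)
  | 0, _ => SimpleGraph.Walk.nil
  | n + 1, h => (mkWalk G f n fun i hi => h i (by omega)).concat (h n (by omega))

lemma mkWalk_length (f : ℕ → V) (n : ℕ) (h : ∀ i < n, G.Adj (f i) (f (i + 1))) :
    (mkWalk G f n h).length = n := by
  induction n with
  | zero => rfl
  | succ n ih =>
    show ((mkWalk G f n _).concat _).length = n + 1
    rw [SimpleGraph.Walk.length_concat, ih]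

lemma mkWalk_support (f : ℕ → V) (n : ℕ) (h : ∀ i < n, G.Adj (f i) (f (i + 1))) :
    (mkWalk G f n h).support = (List.range (n + 1)).map f := by
  induction n with
  | zero => rfl
  | succ n ih =>
    show ((mkWalk G f n _).concat _).support = _
    rw [SimpleGraph.Walk.support_concat, ih, List.range_succ (n := n + 1), List.map_append]
    simp [List.concat_eq_append]

lemma mkWalk_edges (f : ℕ → V) (n : ℕ) (h : ∀ i < n, G.Adj (f i) (f (i + 1))) :
    (mkWalk G f n h).edges = (List.range n).map (fun i => s(f i, f (i + 1))) := by
  induction n with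
  | zero => rfl
  | succ n ih =>
    show ((mkWalk G f n _).concat _).edges = _
    rw [SimpleGraph.Walk.edges_concat, ih, List.range_succ, List.map_append]
    simp [List.concat_eq_append]

/-- Build an induced-cycle witness from a cyclic vertex function. -/
lemma hasInducedCycleGe_of (G : SimpleGraph V) (f : ℕ → V) (n : ℕ) (hn : 6 ≤ n)
    (hadj : ∀ i < n, G.Adj (f i) (f (i + 1)))
    (hper : f n = f 0)
    (hinj : ∀ p q, p < n → q < n → f p = f q → p = q)
    (hind : ∀ x y, (∃ p ≤ n, f p = x) → (∃ q ≤ n, f q = y) → G.Adj x y →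
      ∃ m < n, s(x, y) = s(f m, f (m + 1))) :
    HasInducedCycleGe G 6 := by
  have hinj' : ∀ p q, p ≤ n → q ≤ n → f p = f q → p = q ∨ (p = 0 ∧ q = n) ∨ (p = n ∧ q = 0) := by
    intro p q hp hq he
    rcases Nat.lt_or_ge p n with h1 | h1 <;> rcases Nat.lt_or_ge q n with h2 | h2
    · exact Or.inl (hinj p q h1 h2 he)
    · have hq' : q = n := by omega
      subst hq'
      rw [hper] at he
      have := hinj p 0 h1 (by omega) he
      omega
    · have hp' : p = n := by omega
      subst hp'
      rw [hper] at he
      have := hinj 0 q (by omega) h2 he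
      omega
    · omega
  set c : G.Walk (f 0) (f 0) := (mkWalk G f n hadj).copy rfl hper with hc
  have hsupp : c.support = (List.range (n+1)).map f := by
    rw [hc, SimpleGraph.Walk.support_copy, mkWalk_support]
  have hedges : c.edges = (List.range n).map (fun i => s(f i, f (i+1))) := by
    rw [hc, SimpleGraph.Walk.edges_copy, mkWalk_edges]
  have hlen : c.length = n := by rw [hc, SimpleGraph.Walk.length_copy, mkWalk_length]
  refine ⟨f 0, c, ?_, by rw [hlen]; omega, ?_⟩
  · rw [SimpleGraph.Walk.isCycle_def]
    refine ⟨⟨?_⟩, ?_, ?_⟩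
    · rw [hedges]
      refine List.Nodup.map_on ?_ List.nodup_range
      intro i hi j hj he
      simp only [List.mem_range] at hi hj
      rcases Sym2.eq_iff.1 he with ⟨e1, e2⟩ | ⟨e1, e2⟩
      · exact hinj i j hi hj e1
      · have A := hinj' i (j+1) (by omega) (by omega) e1
        have B := hinj' (i+1) j (by omega) (by omega) e2
        omega
    · intro h
      rw [h] at hlen
      simp at hlen
      omega
    · rw [hsupp, List.range_succ_eq_map, List.map_cons, List.tail_cons, List.map_map]
      refine List.Nodup.map_on ?_ List.nodup_range
      intro i hi j hj he
      simp only [List.mem_range] at hi hj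
      simp only [Function.comp_apply, Nat.succ_eq_add_one] at he
      have := hinj' (i+1) (j+1) (by omega) (by omega) he
      omega
  · intro x hx y hy haxy
    rw [hsupp] at hx hy
    obtain ⟨p, hp, rfl⟩ := List.mem_map.1 hx
    obtain ⟨q, hq, rfl⟩ := List.mem_map.1 hy
    simp only [List.mem_range] at hp hq
    obtain ⟨m, hm, heq⟩ := hind (f p) (f q) ⟨p, by omega, rfl⟩ ⟨q, by omega, rfl⟩ haxy
    rw [hedges, heq]
    exact List.mem_map_of_mem (List.mem_range.2 hm)

end walkbuild
section walkidx
variable {G : SimpleGraph V}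

lemma walk_support_eq {u v : V} (p : G.Walk u v) :
    p.support = (List.range (p.length + 1)).map p.getVert := by
  induction p with
  | nil =>
    rw [SimpleGraph.Walk.support_nil, SimpleGraph.Walk.length_nil,
      (by rfl : (0:ℕ) + 1 = 1), List.range_succ, List.range_zero, List.nil_append,
      List.map_cons, List.map_nil, SimpleGraph.Walk.getVert_zero]
  | @cons u' v' w' h q ih =>
    rw [SimpleGraph.Walk.support_cons, SimpleGraph.Walk.length_cons,
      List.range_succ_eq_map, List.map_cons, List.map_map, List.cons.injEq]
    refine ⟨(SimpleGraph.Walk.getVert_zero _).symm, ?_⟩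
    rw [ih]
    apply List.map_congr_left
    intro i _
    simp only [Function.comp_apply, Nat.succ_eq_add_one]
    exact (SimpleGraph.Walk.getVert_cons_succ q h).symm

lemma walk_edges_eq {u v : V} (p : G.Walk u v) :
    p.edges = (List.range p.length).map (fun i => s(p.getVert i, p.getVert (i + 1))) := by
  induction p with
  | nil => simp
  | @cons u' v' w' h q ih =>
    rw [SimpleGraph.Walk.edges_cons, SimpleGraph.Walk.length_cons,
      List.range_succ_eq_map, List.map_cons, List.map_map, List.cons.injEq]
    constructor
    · show s(u', v') = s((SimpleGraph.Walk.cons h q).getVert 0, (SimpleGraph.Walk.cons h q).getVert (0 + 1))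
      rw [SimpleGraph.Walk.getVert_zero]
      have e1 : (SimpleGraph.Walk.cons h q).getVert (0 + 1) = q.getVert 0 :=
        SimpleGraph.Walk.getVert_cons_succ q h
      rw [e1, SimpleGraph.Walk.getVert_zero]
    · rw [ih]
      apply List.map_congr_left
      intro i _
      simp only [Function.comp_apply, Nat.succ_eq_add_one]
      rw [SimpleGraph.Walk.getVert_cons_succ q h, SimpleGraph.Walk.getVert_cons_succ q h]

end walkidx

section arcsh
variable {r : V → V → Prop}

lemma exists_arc_into {x y : V} (h : Relation.ReflTransGen r x y) (hne : x ≠ y) :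
    ∃ z, r z y := by
  rcases h.cases_tail with e | ⟨c, _, hc⟩
  · exact absurd e.symm hne
  · exact ⟨c, hc⟩

lemma exists_arc_out {x y : V} (h : Relation.ReflTransGen r x y) (hne : x ≠ y) :
    ∃ z, r x z := by
  rcases h.cases_head with e | ⟨c, hc, _⟩
  · exact absurd e hne
  · exact ⟨c, hc⟩

lemma zmod_val_eq_imp {k : ℕ} [NeZero k] {i j : ZMod k} (h : i.val = j.val) : i = j := by
  have h1 := ZMod.natCast_rightInverse (n := k) i
  have h2 := ZMod.natCast_rightInverse (n := k) j
  rw [← h1, ← h2, h]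

/-- Extract a pattern from an induced long cycle in the flattened graph. -/
lemma extract_pat (hacyc : ∀ v, ¬ Relation.TransGen r v v)
    (h : HasInducedCycleGe (flattened r) 6) :
    ∃ k : ℕ, 3 ≤ k ∧ Nonempty (Pat r k) := by
  classical
  obtain ⟨v, c, hcyc, hlen, hind⟩ := h
  obtain ⟨n, hn⟩ : ∃ n, n = c.length := ⟨_, rfl⟩
  have hn6 : 6 ≤ n := by rw [hn]; exact hlen
  have hnpos : 0 < n := by omega
  obtain ⟨w, hwdef⟩ : ∃ w : ℕ → V, w = fun m => c.getVert (m % n) := ⟨_, rfl⟩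
  have hwm : ∀ m, w m = c.getVert (m % n) := fun m => by rw [hwdef]
  have hgl : c.getVert n = v := by rw [hn]; exact c.getVert_length
  have hweq : ∀ m ≤ n, w m = c.getVert m := by
    intro m hm
    rw [hwm]
    rcases Nat.lt_or_ge m n with h1 | h1
    · rw [Nat.mod_eq_of_lt h1]
    · have h2 : m = n := by omega
      rw [h2, Nat.mod_self, SimpleGraph.Walk.getVert_zero, hgl]
  have hadj_iff : ∀ x y, (flattened r).Adj x y ↔ x ≠ y ∧
      ((IsSource r x ∧ IsSink r y ∧ Relation.ReflTransGen r x y) ∨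
       (IsSource r y ∧ IsSink r x ∧ Relation.ReflTransGen r y x)) := by
    intro x y
    exact SimpleGraph.fromRel_adj _ x y
  have hadjw : ∀ m, (flattened r).Adj (w m) (w (m + 1)) := by
    intro m
    have hi : m % n < n := Nat.mod_lt _ hnpos
    have hstep := c.adj_getVert_succ (by omega : m % n < c.length)
    have e1 : (m + 1) % n = (m % n + 1) % n := (Nat.mod_add_mod m n 1).symm
    have e2 : w (m + 1) = c.getVert (m % n + 1) := by
      rw [hwm, e1]
      rcases Nat.lt_or_ge (m % n + 1) n with h1 | h1
      · rw [Nat.mod_eq_of_lt h1]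
      · have h2 : m % n + 1 = n := by omega
        rw [h2, Nat.mod_self, SimpleGraph.Walk.getVert_zero, hgl]
    rw [e2, hwm]
    exact hstep
  have hinjw : ∀ p q, p < n → q < n → w p = w q → p = q := by
    have hnodup : c.support.tail.Nodup := ((SimpleGraph.Walk.isCycle_def c).1 hcyc).2.2
    rw [walk_support_eq, List.range_succ_eq_map, List.map_cons, List.tail_cons,
      List.map_map] at hnodup
    have inj1 := List.inj_on_of_nodup_map hnodup
    intro p q hp hq he
    have key : ∀ m, m < n → c.getVert m = c.getVert ((if m = 0 then n - 1 else m - 1) + 1) := by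
      intro m hm
      by_cases h0 : m = 0
      · subst h0
        rw [if_pos rfl, (by omega : n - 1 + 1 = n), SimpleGraph.Walk.getVert_zero, hgl]
      · rw [if_neg h0, (by omega : m - 1 + 1 = m)]
    have hp' : (if p = 0 then n - 1 else p - 1) ∈ List.range c.length := by
      rw [List.mem_range, ← hn]; split <;> omega
    have hq' : (if q = 0 then n - 1 else q - 1) ∈ List.range c.length := by
      rw [List.mem_range, ← hn]; split <;> omega
    have he' : c.getVert p = c.getVert q := by
      rw [← hweq p (by omega), ← hweq q (by omega)]; exact he
    have := inj1 hp' hq' (by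
      simp only [Function.comp_apply, Nat.succ_eq_add_one]
      rw [← key p hp, ← key q hq]
      exact he')
    split at this <;> split at this <;> omega
  have hinjmod : ∀ p q, w p = w q → p % n = q % n := by
    intro p q h
    refine hinjw (p % n) (q % n) (Nat.mod_lt _ hnpos) (Nat.mod_lt _ hnpos) ?_
    rw [hwm, hwm, Nat.mod_mod_of_dvd _ dvd_rfl, Nat.mod_mod_of_dvd _ dvd_rfl,
      ← hwm, ← hwm]
    exact h
  have hedge_consec : ∀ x y, s(x, y) ∈ c.edges →
      ∃ m < n, (x = w m ∧ y = w (m + 1)) ∨ (x = w (m + 1) ∧ y = w m) := by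
    intro x y hxy
    rw [walk_edges_eq] at hxy
    obtain ⟨m, hm, he⟩ := List.mem_map.1 hxy
    rw [List.mem_range, ← hn] at hm
    refine ⟨m, hm, ?_⟩
    have e1 : c.getVert m = w m := (hweq m (by omega)).symm
    have e2 : c.getVert (m + 1) = w (m + 1) := (hweq (m + 1) (by omega)).symm
    rcases Sym2.eq_iff.1 he.symm with ⟨a1, a2⟩ | ⟨a1, a2⟩
    · exact Or.inl ⟨by rw [a1, e1], by rw [a2, e2]⟩
    · exact Or.inr ⟨by rw [a1, e2], by rw [a2, e1]⟩
  -- alternation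
  have hflip : ∀ m, IsSource r (w (m + 1)) ↔ ¬ IsSource r (w m) := by
    intro m
    rcases (hadj_iff _ _).1 (hadjw m) with ⟨hne, hQ | hQ⟩
    · obtain ⟨s1, s2, s3⟩ := hQ
      obtain ⟨z, hz⟩ := exists_arc_into s3 hne
      exact ⟨fun h => absurd hz (h z), fun h => absurd s1 h⟩
    · obtain ⟨s1, s2, s3⟩ := hQ
      obtain ⟨z, hz⟩ := exists_arc_into s3 (Ne.symm hne)
      exact ⟨fun _ => fun h => h z hz, fun _ => s1⟩
  have hQ1 : ∀ m, IsSource r (w m) →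
      IsSink r (w (m + 1)) ∧ Relation.ReflTransGen r (w m) (w (m + 1)) := by
    intro m hs
    rcases (hadj_iff _ _).1 (hadjw m) with ⟨hne, hQ | hQ⟩
    · exact ⟨hQ.2.1, hQ.2.2⟩
    · exact absurd hs (((hflip m).1 hQ.1))
  have hQ2 : ∀ m, IsSource r (w (m + 1)) →
      IsSink r (w m) ∧ Relation.ReflTransGen r (w (m + 1)) (w m) := by
    intro m hs
    rcases (hadj_iff _ _).1 (hadjw m) with ⟨hne, hQ | hQ⟩
    · exact absurd hQ.1 ((hflip m).1 hs)
    · exact ⟨hQ.2.1, hQ.2.2⟩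
  have heven : ∀ t s, IsSource r (w (2 * t + s)) ↔ IsSource r (w s) := by
    intro t s
    induction t with
    | zero => simp
    | succ t ih =>
      have e : 2 * (t + 1) + s = (2 * t + s) + 1 + 1 := by omega
      rw [e, hflip ((2 * t + s) + 1), hflip (2 * t + s), not_not, ih]
  -- n is even
  have hwn : w n = w 0 := by
    rw [hwm, hwm, Nat.mod_self, Nat.zero_mod]
  have heven_n : ∃ k, n = 2 * k := by
    rcases Nat.even_or_odd n with he | ho
    · obtain ⟨t, ht⟩ := he
      exact ⟨t, by omega⟩
    · exfalso
      obtain ⟨t, ht⟩ := ho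
      have h1 : IsSource r (w n) ↔ IsSource r (w 0) := by rw [hwn]
      have h2 : IsSource r (w (2 * t + 1)) ↔ ¬ IsSource r (w (2 * t)) := hflip (2 * t)
      have h3 : IsSource r (w (2 * t)) ↔ IsSource r (w 0) := by
        simpa using heven t 0
      rw [ht] at h1
      tauto
  obtain ⟨k, hnk⟩ := heven_n
  have hk3 : 3 ≤ k := by omega
  haveI : NeZero k := ⟨by omega⟩
  haveI : Fact (1 < k) := ⟨by omega⟩
  set o : ℕ := if IsSource r (w 0) then 0 else 1 with ho
  have ho1 : o ≤ 1 := by rw [ho]; split <;> omega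
  have hσo : IsSource r (w o) := by
    by_cases h0 : IsSource r (w 0)
    · rw [ho, if_pos h0]; exact h0
    · rw [ho, if_neg h0]
      exact (hflip 0).2 h0
  have hσeven : ∀ t, IsSource r (w (2 * t + o)) := fun t => (heven t o).2 hσo
  -- mod cancellation
  have hcan : ∀ x y c', (2 * x + c') % n = (2 * y + c') % n → x % k = y % k := by
    intro x y c' hmod
    have h1 : (2 * x) % n = (2 * y) % n := Nat.ModEq.add_right_cancel' c' hmod
    rw [hnk, Nat.mul_mod_mul_left, Nat.mul_mod_mul_left] at h1
    omega
  have hcan' : ∀ x y c', x % k = y % k → (2 * x + c') % n = (2 * y + c') % n := by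
    intro x y c' hmod
    have h1 : (2 * x) % n = (2 * y) % n := by
      rw [hnk, Nat.mul_mod_mul_left, Nat.mul_mod_mul_left, hmod]
    exact Nat.ModEq.add_right c' h1
  set A : ZMod k → V := fun i => w (2 * i.val + o) with hA
  set B : ZMod k → V := fun i => w (2 * i.val + o + 1) with hB
  have hA1 : ∀ i : ZMod k, A (i + 1) = w (2 * i.val + o + 2) := by
    intro i
    show w (2 * (i + 1).val + o) = w (2 * i.val + o + 2)
    have hv : (i + 1).val = (i.val + 1) % k := by
      rw [ZMod.val_add, ZMod.val_one]
    rw [hv]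
    have := hcan' ((i.val + 1) % k) (i.val + 1) o (by simp [Nat.mod_mod_of_dvd])
    have e : 2 * (i.val + 1) + o = 2 * i.val + o + 2 := by omega
    rw [e] at this
    rw [hwm, hwm, this]
  have hmemw : ∀ m, w m ∈ c.support := by
    intro m
    rw [walk_support_eq]
    exact List.mem_map.2 ⟨m % n, List.mem_range.2 (by
      have := Nat.mod_lt m hnpos; omega), (hwm m).symm⟩
  have hBsnk : ∀ i : ZMod k, IsSink r (B i) := fun i => (hQ1 _ (hσeven i.val)).1
  have hre1 : ∀ i : ZMod k, Relation.ReflTransGen r (A i) (B i) :=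
    fun i => (hQ1 _ (hσeven i.val)).2
  have hre2 : ∀ i : ZMod k, Relation.ReflTransGen r (A (i + 1)) (B i) := by
    intro i
    have hs : IsSource r (w ((2 * i.val + o + 1) + 1)) := by
      have := hσeven (i.val + 1)
      have e : 2 * (i.val + 1) + o = (2 * i.val + o + 1) + 1 := by omega
      rwa [e] at this
    have := (hQ2 _ hs).2
    rw [hA1 i]
    exact this
  have hane : ∀ i : ZMod k, A i ≠ B i := fun i => (hadjw (2 * i.val + o)).ne
  have hane2 : ∀ i : ZMod k, A (i + 1) ≠ B i := by
    intro i
    rw [hA1 i]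
    exact (hadjw (2 * i.val + o + 1)).ne.symm
  refine ⟨k, hk3, ⟨⟨A, B, hane, hane2, hre1, hre2, ?_, ?_, ?_, ?_⟩⟩⟩
  · -- hab
    intro i j hreach
    have hSrc : IsSource r (A i) := hσeven i.val
    have hSnk : IsSink r (B j) := hBsnk j
    have hne : A i ≠ B j := by
      intro e
      obtain ⟨z, hz⟩ := exists_arc_into (hre1 j) (hane j)
      exact (e ▸ hSrc) z hz
    have hAdj : (flattened r).Adj (A i) (B j) :=
      (hadj_iff _ _).2 ⟨hne, Or.inl ⟨hSrc, hSnk, hreach⟩⟩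
    have hmm := hind _ (hmemw _) _ (hmemw _) hAdj
    obtain ⟨m, hm, hc'⟩ := hedge_consec _ _ hmm
    rcases hc' with ⟨e1, e2⟩ | ⟨e1, e2⟩
    · left
      have m1 := hinjmod _ _ e1
      have m2 := hinjmod _ _ e2
      have s1 : (2 * i.val + o + 1) % n = (m + 1) % n := Nat.ModEq.add_right 1 m1
      have comb : (2 * j.val + o + 1) % n = (2 * i.val + o + 1) % n := m2.trans s1.symm
      have ej : 2 * j.val + o + 1 = 2 * j.val + (o + 1) := by omega
      have ei : 2 * i.val + o + 1 = 2 * i.val + (o + 1) := by omega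
      rw [ej, ei] at comb
      have hval := hcan _ _ _ comb
      rw [Nat.mod_eq_of_lt (ZMod.val_lt j), Nat.mod_eq_of_lt (ZMod.val_lt i)] at hval
      exact zmod_val_eq_imp hval
    · right
      have m1 := hinjmod _ _ e1
      have m2 := hinjmod _ _ e2
      have s1 : (2 * j.val + o + 1 + 1) % n = (m + 1) % n := Nat.ModEq.add_right 1 m2
      have comb : (2 * i.val + o) % n = (2 * j.val + o + 1 + 1) % n := m1.trans s1.symm
      have e : 2 * j.val + o + 1 + 1 = 2 * (j.val + 1) + o := by omega
      rw [e] at comb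
      have hval := hcan _ _ _ comb
      rw [Nat.mod_eq_of_lt (ZMod.val_lt i)] at hval
      have hcast : i = ((j.val + 1 : ℕ) : ZMod k) := by
        have h1 := ZMod.natCast_rightInverse (n := k) i
        rw [← h1, hval, ZMod.natCast_mod]
      rw [Nat.cast_add, Nat.cast_one, ZMod.natCast_rightInverse j] at hcast
      rw [hcast]
      ring
  · -- haa
    intro i j hij hreach
    by_cases he : A i = A j
    · have := hcan _ _ _ (hinjmod _ _ he)
      rw [Nat.mod_eq_of_lt (ZMod.val_lt i), Nat.mod_eq_of_lt (ZMod.val_lt j)] at this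
      exact hij (zmod_val_eq_imp this)
    · obtain ⟨z, hz⟩ := exists_arc_into hreach he
      exact (hσeven j.val) z hz
  · -- hbb
    intro i j hij hreach
    by_cases he : B i = B j
    · have hmod := hinjmod _ _ he
      have ei : 2 * i.val + o + 1 = 2 * i.val + (o + 1) := by omega
      have ej : 2 * j.val + o + 1 = 2 * j.val + (o + 1) := by omega
      rw [ei, ej] at hmod
      have hval := hcan _ _ _ hmod
      rw [Nat.mod_eq_of_lt (ZMod.val_lt i), Nat.mod_eq_of_lt (ZMod.val_lt j)] at hval
      exact hij (zmod_val_eq_imp hval)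
    · obtain ⟨z, hz⟩ := exists_arc_out hreach he
      exact (hBsnk i) z hz
  · -- hba
    intro i j hreach
    by_cases he : B i = A j
    · have hmod := hinjmod _ _ he
      have h2 : (2 : ℕ) ∣ n := ⟨k, hnk⟩
      have p1 : (2 * i.val + o + 1) % n % 2 = (2 * j.val + o) % n % 2 := by rw [hmod]
      rw [Nat.mod_mod_of_dvd _ h2, Nat.mod_mod_of_dvd _ h2] at p1
      omega
    · obtain ⟨z, hz⟩ := exists_arc_out hreach he
      exact (hBsnk i) z hz

end arcsh
section main
variable {r : V → V → Prop}

lemma zmod_add_sub_cancel {k : ℕ} (x : ZMod k) : x + 1 - 1 = x := by ring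

lemma zmod_cast_inj {k : ℕ} [NeZero k] {m m' : ℕ} (hm : m < k) (hm' : m' < k)
    (h : (m : ZMod k) = (m' : ZMod k)) : m = m' := by
  have := congrArg ZMod.val h
  rwa [ZMod.val_natCast, ZMod.val_natCast, Nat.mod_eq_of_lt hm, Nat.mod_eq_of_lt hm'] at this

lemma pat_to_cycle_aux (hacyc : ∀ v, ¬ Relation.TransGen r v v) :
    ∀ N : ℕ, ∀ {k : ℕ} [NeZero k], 3 ≤ k → ∀ P : Pat r k, pL P ≤ N →
    HasInducedCycleGe (SimpleGraph.fromRel r) 6 := by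
  intro N
  induction N using Nat.strong_induction_on with
  | _ N IH =>
  intro k instNZ hk P hPN
  by_cases hsm : ∃ Q : Pat r k, pL Q < pL P
  · obtain ⟨Q, hQ⟩ := hsm
    exact IH (pL Q) (by omega) hk Q le_rfl
  push_neg at hsm
  clear hPN IH
  -- shortest chains for all legs
  choose fP hfP using fun i : ZMod k => exists_min_chain (P.re1 i)
  choose fR hfR using fun i : ZMod k => exists_min_chain (P.re2 i)
  set nP : ZMod k → ℕ := fun i => dd r (P.a i) (P.b i) with hnP
  set nR : ZMod k → ℕ := fun i => dd r (P.a (i + 1)) (P.b i) with hnR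
  have hnP1 : ∀ i, 1 ≤ nP i := fun i => dd_pos (P.re1 i) (P.ne1 i)
  have hnR1 : ∀ i, 1 ≤ nR i := fun i => dd_pos (P.re2 i) (P.ne2 i)
  have hfP0 : ∀ i, fP i 0 = P.a i := fun i => (hfP i).1
  have hfPn : ∀ i, fP i (nP i) = P.b i := fun i => (hfP i).2.1
  have hfR0 : ∀ i, fR i 0 = P.a (i + 1) := fun i => (hfR i).1
  have hfRn : ∀ i, fR i (nR i) = P.b i := fun i => (hfR i).2.1
  have hPa : ∀ (i : ZMod k) (j : ℕ), j ≤ nP i → Relation.ReflTransGen r (P.a i) (fP i j) := by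
    intro i j hj
    have := (hfP i).reach_sub (Nat.zero_le j) hj
    rwa [hfP0] at this
  have hPb : ∀ (i : ZMod k) (j : ℕ), j ≤ nP i → Relation.ReflTransGen r (fP i j) (P.b i) := by
    intro i j hj
    have := (hfP i).reach_sub hj (le_refl (nP i))
    rwa [hfPn] at this
  have hRa : ∀ (i : ZMod k) (j : ℕ), j ≤ nR i → Relation.ReflTransGen r (P.a (i + 1)) (fR i j) := by
    intro i j hj
    have := (hfR i).reach_sub (Nat.zero_le j) hj
    rwa [hfR0] at this
  have hRb : ∀ (i : ZMod k) (j : ℕ), j ≤ nR i → Relation.ReflTransGen r (fR i j) (P.b i) := by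
    intro i j hj
    have := (hfR i).reach_sub hj (le_refl (nR i))
    rwa [hfRn] at this
  have hPd1 : ∀ (i : ZMod k) (j : ℕ), j ≤ nP i → dd r (P.a i) (fP i j) = j := by
    intro i j hj
    have := min_chain_dd (hfP i) (Nat.zero_le j) hj
    rwa [hfP0, Nat.sub_zero] at this
  have hPd2 : ∀ (i : ZMod k) (j : ℕ), j ≤ nP i → dd r (fP i j) (P.b i) = nP i - j := by
    intro i j hj
    have := min_chain_dd (hfP i) hj (le_refl (nP i))
    rwa [hfPn] at this
  have hRd1 : ∀ (i : ZMod k) (j : ℕ), j ≤ nR i → dd r (P.a (i + 1)) (fR i j) = j := by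
    intro i j hj
    have := min_chain_dd (hfR i) (Nat.zero_le j) hj
    rwa [hfR0, Nat.sub_zero] at this
  have hRd2 : ∀ (i : ZMod k) (j : ℕ), j ≤ nR i → dd r (fR i j) (P.b i) = nR i - j := by
    intro i j hj
    have := min_chain_dd (hfR i) hj (le_refl (nR i))
    rwa [hfRn] at this
  have hPinj : ∀ (i : ZMod k) (j j' : ℕ), j ≤ nP i → j' ≤ nP i → fP i j = fP i j' → j = j' := by
    intro i j j' hj hj' he
    by_contra hne
    exact min_chain_inj (hfP i) hj hj' hne he
  have hRinj : ∀ (i : ZMod k) (j j' : ℕ), j ≤ nR i → j' ≤ nR i → fR i j = fR i j' → j = j' := by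
    intro i j j' hj hj' he
    by_contra hne
    exact min_chain_inj (hfR i) hj hj' hne he
  have hPstep : ∀ (i : ZMod k) (s s' : ℕ), s ≤ nP i → s' ≤ nP i →
      r (fP i s) (fP i s') → s' = s + 1 :=
    fun i s s' hs hs' harc => min_chain_arc hacyc (hfP i) hs hs' harc
  have hRstep : ∀ (i : ZMod k) (s s' : ℕ), s ≤ nR i → s' ≤ nR i →
      r (fR i s) (fR i s') → s' = s + 1 :=
    fun i s s' hs hs' harc => min_chain_arc hacyc (hfR i) hs hs' harc
  have hnPe : ∀ i, nP i = dd r (P.a i) (P.b i) := fun _ => rfl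
  have hnRe : ∀ i, nR i = dd r (P.a (i + 1)) (P.b i) := fun _ => rfl
  -- reduction kill lemmas
  have updB_kill : ∀ (i : ZMod k) (v : V)
      (h1 : Relation.ReflTransGen r (P.a i) v)
      (h2 : Relation.ReflTransGen r (P.a (i + 1)) v)
      (h3 : Relation.ReflTransGen r v (P.b i))
      (hne : v ≠ P.b i),
      dd r (P.a i) v ≤ nP i → dd r (P.a (i + 1)) v ≤ nR i →
      (dd r (P.a i) v < nP i ∨ dd r (P.a (i + 1)) v < nR i) → False := by
    intro i v h1 h2 h3 hne hle1 hle2 hstrict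
    refine absurd (pL_lt P (P.updB hacyc hk i v h1 h2 h3 hne) ?_ i ?_) (not_lt.2 (hsm _))
    · intro j
      simp only [pterm, Pat.updB_a, Pat.updB_b]
      by_cases hj : j = i
      · subst hj
        rw [Function.update_self]
        simp only [← hnPe, ← hnRe]
        omega
      · rw [Function.update_of_ne hj]
    · simp only [pterm, Pat.updB_a, Pat.updB_b]
      rw [Function.update_self]
      simp only [← hnPe, ← hnRe]
      omega
  have updA_kill : ∀ (i : ZMod k) (u : V)
      (h0 : Relation.ReflTransGen r (P.a i) u)
      (h1 : Relation.ReflTransGen r u (P.b i))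
      (h2 : Relation.ReflTransGen r u (P.b (i - 1)))
      (hne : u ≠ P.a i),
      dd r u (P.b i) ≤ nP i → dd r u (P.b (i - 1)) ≤ nR (i - 1) →
      (dd r u (P.b i) < nP i ∨ dd r u (P.b (i - 1)) < nR (i - 1)) → False := by
    intro i u h0 h1 h2 hne hle1 hle2 hstrict
    have e1 : i - 1 + 1 = i := zmod_sub_add_cancel i
    have hbr : nR (i - 1) = dd r (P.a i) (P.b (i - 1)) := by
      rw [hnRe (i - 1), e1]
    have hcmp : ∀ j, pterm (P.updA hacyc hk i u h0 h1 h2 hne) j ≤ pterm P j := by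
      intro j
      simp only [pterm, Pat.updA_a, Pat.updA_b]
      by_cases hj : j = i
      · rw [hj, Function.update_self, Function.update_of_ne (zmod_succ_ne hk i)]
        simp only [← hnPe, ← hnRe]
        omega
      · rw [Function.update_of_ne hj]
        by_cases hj1 : j = i - 1
        · rw [hj1, e1, Function.update_self]
          simp only [← hnPe]
          omega
        · rw [Function.update_of_ne (fun h => hj1 (by rw [← h]; ring))]
    rcases hstrict with hst | hst
    · refine absurd (pL_lt P _ hcmp i ?_) (not_lt.2 (hsm _))
      simp only [pterm, Pat.updA_a, Pat.updA_b]
      rw [Function.update_self, Function.update_of_ne (zmod_succ_ne hk i)]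
      simp only [← hnPe, ← hnRe]
      omega
    · refine absurd (pL_lt P _ hcmp (i - 1) ?_) (not_lt.2 (hsm _))
      simp only [pterm, Pat.updA_a, Pat.updA_b]
      rw [Function.update_of_ne (zmod_pred_ne hk i), e1, Function.update_self]
      simp only [← hnPe]
      omega
  have updAB_kill : ∀ (i : ZMod k) (u v : V),
      Relation.ReflTransGen r (P.a i) u → Relation.ReflTransGen r u (P.b i) →
      Relation.ReflTransGen r (P.a (i - 1)) v → Relation.ReflTransGen r v (P.b (i - 1)) →
      r u v → u ≠ P.a i → v ≠ P.b (i - 1) →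
      dd r u (P.b i) < nP i → dd r (P.a (i - 1)) v ≤ nP (i - 1) → False := by
    intro i u v hau hub hav hvb harc hune hvne hstrict1 hle2
    have e1 : i - 1 + 1 = i := zmod_sub_add_cancel i
    have hbr : nR (i - 1) = dd r (P.a i) (P.b (i - 1)) := by
      rw [hnRe (i - 1), e1]
    have h2' : Relation.ReflTransGen r (P.a (i - 1 + 1)) v := by
      rw [e1]; exact hau.tail harc
    have hQ1a : (P.updB hacyc hk (i - 1) v hav h2' hvb hvne).a = P.a := rfl
    have hQ1b : (P.updB hacyc hk (i - 1) v hav h2' hvb hvne).b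
        = Function.update P.b (i - 1) v := rfl
    have hq0 : Relation.ReflTransGen r ((P.updB hacyc hk (i - 1) v hav h2' hvb hvne).a i) u := by
      rw [hQ1a]; exact hau
    have hq1 : Relation.ReflTransGen r u ((P.updB hacyc hk (i - 1) v hav h2' hvb hvne).b i) := by
      rw [hQ1b, Function.update_of_ne (zmod_pred_ne hk i).symm]
      exact hub
    have hq2 : Relation.ReflTransGen r u
        ((P.updB hacyc hk (i - 1) v hav h2' hvb hvne).b (i - 1)) := by
      rw [hQ1b, Function.update_self]
      exact Relation.ReflTransGen.single harc
    have hqne : u ≠ (P.updB hacyc hk (i - 1) v hav h2' hvb hvne).a i := by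
      rw [hQ1a]; exact hune
    set Q2 := (P.updB hacyc hk (i - 1) v hav h2' hvb hvne).updA hacyc hk i u hq0 hq1 hq2 hqne
      with hQ2
    have hQ2a : Q2.a = Function.update P.a i u := rfl
    have hQ2b : Q2.b = Function.update P.b (i - 1) v := rfl
    have hduv : dd r u v ≤ 1 := dd_arc harc
    have h1R := hnR1 (i - 1)
    refine absurd (pL_lt P Q2 ?_ i ?_) (not_lt.2 (hsm _))
    · intro j
      simp only [pterm, hQ2a, hQ2b]
      by_cases hj : j = i
      · rw [hj, Function.update_self, Function.update_of_ne (zmod_succ_ne hk i),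
          Function.update_of_ne (zmod_pred_ne hk i).symm]
        simp only [← hnPe, ← hnRe]
        omega
      · by_cases hj1 : j = i - 1
        · rw [hj1, Function.update_of_ne (zmod_pred_ne hk i), e1, Function.update_self,
            Function.update_self]
          simp only [← hnPe]
          omega
        · rw [Function.update_of_ne hj, Function.update_of_ne hj1,
            Function.update_of_ne (fun h => hj1 (by rw [← h]; ring))]
    · simp only [pterm, hQ2a, hQ2b]
      rw [Function.update_self, Function.update_of_ne (zmod_succ_ne hk i),
        Function.update_of_ne (zmod_pred_ne hk i).symm]
      simp only [← hnPe, ← hnRe]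
      omega
  have updBA_kill : ∀ (i : ZMod k) (u v : V),
      Relation.ReflTransGen r (P.a (i + 1)) u → Relation.ReflTransGen r u (P.b i) →
      Relation.ReflTransGen r (P.a (i + 1 + 1)) v → Relation.ReflTransGen r v (P.b (i + 1)) →
      r u v → u ≠ P.a (i + 1) → v ≠ P.b (i + 1) →
      dd r u (P.b i) < nR i → dd r (P.a (i + 1 + 1)) v ≤ nR (i + 1) → False := by
    intro i u v hau hub hav hvb harc hune hvne hstrict1 hle2
    have e1 : i + 1 - 1 = i := zmod_add_sub_cancel i
    have h1' : Relation.ReflTransGen r (P.a (i + 1)) v := hau.tail harc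
    have hQ1a : (P.updB hacyc hk (i + 1) v h1' hav hvb hvne).a = P.a := rfl
    have hQ1b : (P.updB hacyc hk (i + 1) v h1' hav hvb hvne).b
        = Function.update P.b (i + 1) v := rfl
    have hq0 : Relation.ReflTransGen r ((P.updB hacyc hk (i + 1) v h1' hav hvb hvne).a (i + 1)) u := by
      rw [hQ1a]; exact hau
    have hq1 : Relation.ReflTransGen r u ((P.updB hacyc hk (i + 1) v h1' hav hvb hvne).b (i + 1)) := by
      rw [hQ1b, Function.update_self]
      exact Relation.ReflTransGen.single harc
    have hq2 : Relation.ReflTransGen r u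
        ((P.updB hacyc hk (i + 1) v h1' hav hvb hvne).b (i + 1 - 1)) := by
      rw [hQ1b, e1, Function.update_of_ne (zmod_succ_ne hk i).symm]
      exact hub
    have hqne : u ≠ (P.updB hacyc hk (i + 1) v h1' hav hvb hvne).a (i + 1) := by
      rw [hQ1a]; exact hune
    set Q2 := (P.updB hacyc hk (i + 1) v h1' hav hvb hvne).updA hacyc hk (i + 1) u hq0 hq1 hq2 hqne
      with hQ2
    have hQ2a : Q2.a = Function.update P.a (i + 1) u := rfl
    have hQ2b : Q2.b = Function.update P.b (i + 1) v := rfl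
    have hduv : dd r u v ≤ 1 := dd_arc harc
    have h1P := hnP1 (i + 1)
    refine absurd (pL_lt P Q2 ?_ i ?_) (not_lt.2 (hsm _))
    · intro j
      simp only [pterm, hQ2a, hQ2b]
      by_cases hj : j = i + 1
      · rw [hj, Function.update_self, Function.update_self,
          Function.update_of_ne (zmod_succ_ne hk (i + 1))]
        rw [← hnPe (i + 1), ← hnRe (i + 1)]
        omega
      · by_cases hj1 : j = i
        · rw [hj1, Function.update_of_ne (zmod_succ_ne hk i).symm,
            Function.update_of_ne (zmod_succ_ne hk i).symm, Function.update_self]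
          simp only [← hnPe, ← hnRe]
          omega
        · rw [Function.update_of_ne hj, Function.update_of_ne hj,
            Function.update_of_ne (fun h => hj1 (by
              have h2 : j + 1 - 1 = i + 1 - 1 := by rw [h]
              rwa [zmod_add_sub_cancel, zmod_add_sub_cancel] at h2))]
    · simp only [pterm, hQ2a, hQ2b]
      rw [Function.update_of_ne (zmod_succ_ne hk i).symm,
        Function.update_of_ne (zmod_succ_ne hk i).symm, Function.update_self]
      simp only [← hnPe, ← hnRe]
      omega
  
  have e11 : ∀ i : ZMod k, i - 1 + 1 = i := zmod_sub_add_cancel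
  have keyPP : ∀ (i i' : ZMod k) (s s' : ℕ), s ≤ nP i → s' ≤ nP i' →
      fP i s = fP i' s' → i ≠ i' → False := by
    intro i i' s s' hs hs' he hne
    have c1 : Relation.ReflTransGen r (P.a i) (P.b i') :=
      (hPa i s hs).trans (by rw [he]; exact hPb i' s' hs')
    have c2 : Relation.ReflTransGen r (P.a i') (P.b i) :=
      (hPa i' s' hs').trans (by rw [← he]; exact hPb i s hs)
    rcases P.hab i i' c1 with h1 | h1
    · exact hne h1.symm
    rcases P.hab i' i c2 with h2 | h2
    · exact hne h2
    apply zmod_two_ne_zero hk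
    linear_combination h1 + h2
  have keyRR : ∀ (i i' : ZMod k) (s s' : ℕ), s ≤ nR i → s' ≤ nR i' →
      fR i s = fR i' s' → i ≠ i' → False := by
    intro i i' s s' hs hs' he hne
    have c1 : Relation.ReflTransGen r (P.a (i + 1)) (P.b i') :=
      (hRa i s hs).trans (by rw [he]; exact hRb i' s' hs')
    have c2 : Relation.ReflTransGen r (P.a (i' + 1)) (P.b i) :=
      (hRa i' s' hs').trans (by rw [← he]; exact hRb i s hs)
    rcases P.hab (i + 1) i' c1 with h1 | h1
    · rcases P.hab (i' + 1) i c2 with h2 | h2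
      · apply zmod_two_ne_zero hk
        linear_combination -(h1 + h2)
      · rw [zmod_add_sub_cancel] at h2
        exact hne h2
    · rw [zmod_add_sub_cancel] at h1
      exact hne h1.symm
  have keyPR : ∀ (i i' : ZMod k) (s t : ℕ), s ≤ nP i → 0 < t → t < nR i' →
      fP i s = fR i' t → False := by
    intro i i' s t hs ht0 htn he
    have c1 : Relation.ReflTransGen r (P.a i) (P.b i') :=
      (hPa i s hs).trans (by rw [he]; exact hRb i' t (le_of_lt htn))
    rcases P.hab i i' c1 with hii | hii
    · subst hii
      by_cases hsnp : s = nP i'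
      · have : t = nR i' := by
          apply hRinj i' t (nR i') (le_of_lt htn) le_rfl
          rw [hfRn, ← hfPn, ← hsnp, ← he]
        omega
      · by_cases hs0 : s = 0
        · have hr : Relation.ReflTransGen r (P.a (i' + 1)) (P.a i') := by
            have h5 := hRa i' t (le_of_lt htn)
            rw [← he, hs0, hfP0] at h5
            exact h5
          exact P.haa (i' + 1) i' (zmod_succ_ne hk i') hr
        · refine updB_kill i' (fP i' s) (hPa i' s hs) ?_ (hPb i' s hs) ?_ ?_ ?_ ?_
          · rw [he]; exact hRa i' t (le_of_lt htn)
          · intro h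
            exact hsnp (hPinj i' s (nP i') hs le_rfl (by rw [h, hfPn]))
          · rw [hPd1 i' s hs]; exact hs
          · rw [he, hRd1 i' t (le_of_lt htn)]; omega
          · left
            rw [hPd1 i' s hs]; omega
    · subst hii
      by_cases hs0 : s = 0
      · have : t = 0 := by
          apply hRinj (i - 1) t 0 (le_of_lt htn) (Nat.zero_le _)
          rw [hfR0, e11, ← hfP0 i, ← hs0, ← he]
        omega
      · by_cases hsnp : s = nP i
        · have hr : Relation.ReflTransGen r (P.b i) (P.b (i - 1)) := by
            have h5 := hRb (i - 1) t (le_of_lt htn)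
            rw [← he, hsnp, hfPn] at h5
            exact h5
          exact P.hbb i (i - 1) (zmod_pred_ne hk i).symm hr
        · refine updA_kill i (fP i s) (hPa i s hs) (hPb i s hs) ?_ ?_ ?_ ?_ ?_
          · rw [he]; exact hRb (i - 1) t (le_of_lt htn)
          · intro h
            exact hs0 (hPinj i s 0 hs (Nat.zero_le _) (by rw [h, hfP0]))
          · rw [hPd2 i s hs]; omega
          · rw [he, hRd2 (i - 1) t (le_of_lt htn)]; omega
          · left
            rw [hPd2 i s hs]; omega
  
  have hsingle : ∀ {x y : V}, r x y → Relation.ReflTransGen r x y :=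
    fun h => Relation.ReflTransGen.single h
  have keyArc : ∀ (u v : V), r u v →
      ((∃ (i : ZMod k) (s : ℕ), s ≤ nP i ∧ u = fP i s) ∨
       (∃ (i : ZMod k) (t : ℕ), t ≤ nR i ∧ u = fR i t)) →
      ((∃ (i : ZMod k) (s : ℕ), s ≤ nP i ∧ v = fP i s) ∨
       (∃ (i : ZMod k) (t : ℕ), t ≤ nR i ∧ v = fR i t)) →
      (∃ (i : ZMod k) (s : ℕ), s + 1 ≤ nP i ∧ u = fP i s ∧ v = fP i (s + 1)) ∨
      (∃ (i : ZMod k) (t : ℕ), t + 1 ≤ nR i ∧ u = fR i t ∧ v = fR i (t + 1)) := by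
    rintro u v harc (⟨i, s, hs, rfl⟩ | ⟨i, t, ht, rfl⟩) hdv
    · -- u on P-leg i
      rcases hdv with ⟨i', s', hs', rfl⟩ | ⟨i', t', ht', rfl⟩
      · -- PP
        by_cases hii : i = i'
        · subst hii
          have hstep := hPstep i s s' hs hs' harc
          exact Or.inl ⟨i, s, by omega, rfl, by rw [hstep]⟩
        · have c1 : Relation.ReflTransGen r (P.a i) (P.b i') :=
            (hPa i s hs).trans ((hsingle harc).trans (hPb i' s' hs'))
          rcases P.hab i i' c1 with h1 | h1
          · exact absurd h1.symm hii
          subst h1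
          by_cases hs0np : s = 0 ∧ s' = nP (i - 1)
          · obtain ⟨hs0, hs'np⟩ := hs0np
            have harc' : r (fR (i - 1) 0) (fR (i - 1) (nR (i - 1))) := by
              rw [hfR0, e11, hfRn, ← hfP0 i, ← hfPn (i-1), ← hs0, ← hs'np]
              exact harc
            have hstep := hRstep (i - 1) 0 (nR (i - 1)) (Nat.zero_le _) le_rfl harc'
            refine Or.inr ⟨i - 1, 0, by omega, ?_, ?_⟩
            · rw [hs0, hfP0, hfR0, e11]
            · rw [hs'np, ← hstep, hfRn, hfPn]
          · exfalso
            by_cases hsnp : s = nP i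
            · have h5 : Relation.ReflTransGen r (P.b i) (P.b (i - 1)) := by
                have h6 := (hsingle harc).trans (hPb (i-1) s' hs')
                rwa [hsnp, hfPn] at h6
              exact P.hbb i (i-1) (zmod_pred_ne hk i).symm h5
            · by_cases hs'0 : s' = 0
              · have h5 : Relation.ReflTransGen r (P.a i) (P.a (i - 1)) := by
                  have h6 := (hPa i s hs).tail harc
                  rwa [hs'0, hfP0] at h6
                exact P.haa i (i-1) (fun h => zmod_pred_ne hk i h.symm) h5
              · by_cases hs0 : s = 0
                · have hs'lt : s' < nP (i - 1) :=
                    lt_of_le_of_ne hs' (fun h => hs0np ⟨hs0, h⟩)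
                  have harc0 : r (P.a i) (fP (i - 1) s') := by
                    rw [← hfP0 i, ← hs0]; exact harc
                  refine updB_kill (i-1) (fP (i-1) s') (hPa (i-1) s' hs') ?_
                    (hPb (i-1) s' hs') ?_ ?_ ?_ ?_
                  · rw [e11]; exact hsingle harc0
                  · intro h
                    exact (fun h2 => hs0np ⟨hs0, h2⟩)
                      (hPinj (i-1) s' (nP (i-1)) hs' le_rfl (by rw [h, hfPn]))
                  · rw [hPd1 (i-1) s' hs']; exact hs'
                  · have h7 : dd r (P.a (i - 1 + 1)) (fP (i-1) s') ≤ 1 := by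
                      rw [e11]; exact dd_arc harc0
                    exact le_trans h7 (hnR1 _)
                  · left; rw [hPd1 (i-1) s' hs']; omega
                · have hslt : s < nP i := lt_of_le_of_ne hs hsnp
                  by_cases hs'np : s' = nP (i - 1)
                  · have harc0 : r (fP i s) (P.b (i - 1)) := by
                      rw [← hfPn (i-1), ← hs'np]; exact harc
                    refine updA_kill i (fP i s) (hPa i s hs) (hPb i s hs)
                      (hsingle harc0) ?_ ?_ ?_ ?_
                    · intro h
                      exact hs0 (hPinj i s 0 hs (Nat.zero_le _) (by rw [h, hfP0]))
                    · rw [hPd2 i s hs]; omega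
                    · exact le_trans (dd_arc harc0) (hnR1 _)
                    · left; rw [hPd2 i s hs]; omega
                  · have hs'lt : s' < nP (i - 1) := lt_of_le_of_ne hs' hs'np
                    refine updAB_kill i (fP i s) (fP (i-1) s') (hPa i s hs) (hPb i s hs)
                      (hPa (i-1) s' hs') (hPb (i-1) s' hs') harc ?_ ?_ ?_ ?_
                    · intro h
                      exact hs0 (hPinj i s 0 hs (Nat.zero_le _) (by rw [h, hfP0]))
                    · intro h
                      exact hs'np (hPinj (i-1) s' (nP (i-1)) hs' le_rfl (by rw [h, hfPn]))
                    · rw [hPd2 i s hs]; omega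
                    · rw [hPd1 (i-1) s' hs']; exact hs'
      · -- PR
        have c1 : Relation.ReflTransGen r (P.a i) (P.b i') :=
          (hPa i s hs).trans ((hsingle harc).trans (hRb i' t' ht'))
        rcases P.hab i i' c1 with h1 | h1
        · replace h1 := h1.symm
          subst h1
          by_cases ht'n : t' = nR i
          · have harc' : r (fP i s) (fP i (nP i)) := by
              rw [hfPn, ← hfRn i, ← ht'n]; exact harc
            have hstep := hPstep i s (nP i) hs le_rfl harc'
            refine Or.inl ⟨i, s, by omega, rfl, ?_⟩
            rw [ht'n, ← hstep, hfPn, hfRn]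
          · by_cases ht'0 : t' = 0
            · exfalso
              have h5 : Relation.ReflTransGen r (P.a i) (P.a (i + 1)) := by
                have h6 := (hPa i s hs).tail harc
                rwa [ht'0, hfR0] at h6
              exact P.haa i (i+1) (zmod_succ_ne hk i).symm h5
            · exfalso
              have ht'lt : t' < nR i := lt_of_le_of_ne ht' ht'n
              by_cases hsnp : s = nP i
              · refine not_reach_of_arc_rev hacyc harc ?_
                have h6 := hRb i t' ht'
                rwa [← hfPn i, ← hsnp] at h6
              · refine updB_kill i (fR i t') ((hPa i s hs).tail harc)
                  (hRa i t' ht') (hRb i t' ht') ?_ ?_ ?_ ?_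
                · intro h
                  exact ht'n (hRinj i t' (nR i) ht' le_rfl (by rw [h, hfRn]))
                · have t1 := dd_triangle (hPa i s hs) (hsingle harc)
                  have t2 := dd_arc harc
                  have t3 := hPd1 i s hs
                  have hslt : s < nP i := lt_of_le_of_ne hs hsnp
                  omega
                · rw [hRd1 i t' ht']; exact ht'
                · right; rw [hRd1 i t' ht']; omega
        · subst h1
          by_cases hs0 : s = 0
          · have harc' : r (fR (i-1) 0) (fR (i-1) t') := by
              rw [hfR0, e11, ← hfP0 i, ← hs0]; exact harc
            have hstep := hRstep (i-1) 0 t' (Nat.zero_le _) ht' harc'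
            refine Or.inr ⟨i - 1, 0, by omega, ?_, ?_⟩
            · rw [hs0, hfP0, hfR0, e11]
            · rw [hstep]
          · by_cases hsnp : s = nP i
            · exfalso
              have h5 : Relation.ReflTransGen r (P.b i) (P.b (i - 1)) := by
                have h6 := (hsingle harc).trans (hRb (i-1) t' ht')
                rwa [hsnp, hfPn] at h6
              exact P.hbb i (i-1) (zmod_pred_ne hk i).symm h5
            · exfalso
              by_cases ht'0 : t' = 0
              · refine not_reach_of_arc_rev hacyc harc ?_
                have h6 : fR (i-1) t' = P.a i := by rw [ht'0, hfR0, e11]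
                have h7 := hPa i s hs
                rwa [← h6] at h7
              · have hslt : s < nP i := lt_of_le_of_ne hs hsnp
                refine updA_kill i (fP i s) (hPa i s hs) (hPb i s hs)
                  ((hsingle harc).trans (hRb (i-1) t' ht')) ?_ ?_ ?_ ?_
                · intro h
                  exact hs0 (hPinj i s 0 hs (Nat.zero_le _) (by rw [h, hfP0]))
                · rw [hPd2 i s hs]; omega
                · have t1 := dd_triangle (hsingle harc) (hRb (i-1) t' ht')
                  have t2 := dd_arc harc
                  have t3 := hRd2 (i-1) t' ht'
                  omega
                · left; rw [hPd2 i s hs]; omega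
    · -- u on R-leg i
      rcases hdv with ⟨i', s', hs', rfl⟩ | ⟨i', t', ht', rfl⟩
      · -- RP
        have c1 : Relation.ReflTransGen r (P.a (i + 1)) (P.b i') :=
          (hRa i t ht).trans ((hsingle harc).trans (hPb i' s' hs'))
        rcases P.hab (i+1) i' c1 with h1 | h1
        · subst h1
          by_cases ht0 : t = 0
          · have harc' : r (fP (i+1) 0) (fP (i+1) s') := by
              rw [hfP0, ← hfR0 i, ← ht0]; exact harc
            have hstep := hPstep (i+1) 0 s' (Nat.zero_le _) hs' harc'
            refine Or.inl ⟨i+1, 0, by omega, ?_, ?_⟩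
            · rw [ht0, hfR0, hfP0]
            · rw [hstep]
          · by_cases htn : t = nR i
            · exfalso
              have h5 : Relation.ReflTransGen r (P.b i) (P.b (i + 1)) := by
                have h6 := (hsingle harc).trans (hPb (i+1) s' hs')
                rwa [htn, hfRn] at h6
              exact P.hbb i (i+1) (zmod_succ_ne hk i).symm h5
            · exfalso
              by_cases hs'0 : s' = 0
              · refine not_reach_of_arc_rev hacyc harc ?_
                have h6 : fP (i+1) s' = P.a (i+1) := by rw [hs'0, hfP0]
                have h7 := hRa i t ht
                rwa [← h6] at h7
              · have e2 : (i : ZMod k) + 1 - 1 = i := zmod_add_sub_cancel i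
                refine updA_kill (i+1) (fR i t) (hRa i t ht)
                  ((hsingle harc).trans (hPb (i+1) s' hs')) (by rw [e2]; exact hRb i t ht)
                  ?_ ?_ ?_ ?_
                · intro h
                  exact ht0 (hRinj i t 0 ht (Nat.zero_le _) (by rw [h, hfR0]))
                · have t1 := dd_triangle (hsingle harc) (hPb (i+1) s' hs')
                  have t2 := dd_arc harc
                  have t3 := hPd2 (i+1) s' hs'
                  have h1P := hnP1 (i+1)
                  omega
                · rw [e2, hRd2 i t ht]; omega
                · right; rw [e2, hRd2 i t ht]; omega
        · rw [zmod_add_sub_cancel] at h1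
          replace h1 := h1.symm
          subst h1
          by_cases hs'np : s' = nP i
          · have harc' : r (fR i t) (fR i (nR i)) := by
              rw [hfRn, ← hfPn i, ← hs'np]; exact harc
            have hstep := hRstep i t (nR i) ht le_rfl harc'
            refine Or.inr ⟨i, t, by omega, rfl, ?_⟩
            rw [hs'np, ← hstep, hfRn, hfPn]
          · by_cases hs'0 : s' = 0
            · exfalso
              have h5 : Relation.ReflTransGen r (P.a (i+1)) (P.a i) := by
                have h6 := (hRa i t ht).tail harc
                rwa [hs'0, hfP0] at h6
              exact P.haa (i+1) i (zmod_succ_ne hk i) h5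
            · exfalso
              by_cases htn : t = nR i
              · refine not_reach_of_arc_rev hacyc harc ?_
                have h6 := hPb i s' hs'
                rwa [← hfRn i, ← htn] at h6
              · have hs'lt : s' < nP i := lt_of_le_of_ne hs' hs'np
                refine updB_kill i (fP i s') (hPa i s' hs') ((hRa i t ht).tail harc)
                  (hPb i s' hs') ?_ ?_ ?_ ?_
                · intro h
                  exact hs'np (hPinj i s' (nP i) hs' le_rfl (by rw [h, hfPn]))
                · rw [hPd1 i s' hs']; exact hs'
                · have t1 := dd_triangle (hRa i t ht) (hsingle harc)
                  have t2 := dd_arc harc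
                  have t3 := hRd1 i t ht
                  have htlt : t < nR i := lt_of_le_of_ne ht htn
                  omega
                · left; rw [hPd1 i s' hs']; omega
      · -- RR
        by_cases hii : i = i'
        · subst hii
          have hstep := hRstep i t t' ht ht' harc
          exact Or.inr ⟨i, t, by omega, rfl, by rw [hstep]⟩
        · have c1 : Relation.ReflTransGen r (P.a (i + 1)) (P.b i') :=
            (hRa i t ht).trans ((hsingle harc).trans (hRb i' t' ht'))
          rcases P.hab (i+1) i' c1 with h1 | h1
          · subst h1
            by_cases htn : t = nR i
            · exfalso
              have h5 : Relation.ReflTransGen r (P.b i) (P.b (i + 1)) := by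
                have h6 := (hsingle harc).trans (hRb (i+1) t' ht')
                rwa [htn, hfRn] at h6
              exact P.hbb i (i+1) (zmod_succ_ne hk i).symm h5
            · by_cases ht'0 : t' = 0
              · exfalso
                have h5 : Relation.ReflTransGen r (P.a (i+1)) (P.a (i+1+1)) := by
                  have h6 := (hRa i t ht).tail harc
                  rwa [ht'0, hfR0] at h6
                exact P.haa (i+1) (i+1+1) (zmod_succ_ne hk (i+1)).symm h5
              · by_cases ht'n : t' = nR (i+1)
                · by_cases ht0 : t = 0
                  · have harc' : r (fP (i+1) 0) (fP (i+1) (nP (i+1))) := by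
                      rw [hfP0, hfPn, ← hfR0 i, ← hfRn (i+1), ← ht0, ← ht'n]
                      exact harc
                    have hstep := hPstep (i+1) 0 (nP (i+1)) (Nat.zero_le _) le_rfl harc'
                    refine Or.inl ⟨i+1, 0, by omega, ?_, ?_⟩
                    · rw [ht0, hfR0, hfP0]
                    · rw [ht'n, ← hstep, hfPn, hfRn]
                  · exfalso
                    have e2 := zmod_add_sub_cancel i
                    have harc0 : r (fR i t) (P.b (i+1)) := by
                      rw [← hfRn (i+1), ← ht'n]; exact harc
                    refine updA_kill (i+1) (fR i t) (hRa i t ht) (hsingle harc0)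
                      (by rw [e2]; exact hRb i t ht) ?_ ?_ ?_ ?_
                    · intro h
                      exact ht0 (hRinj i t 0 ht (Nat.zero_le _) (by rw [h, hfR0]))
                    · exact le_trans (dd_arc harc0) (hnP1 _)
                    · rw [e2, hRd2 i t ht]; omega
                    · right; rw [e2, hRd2 i t ht]; omega
                · have ht'lt : t' < nR (i+1) := lt_of_le_of_ne ht' ht'n
                  by_cases ht0 : t = 0
                  · exfalso
                    have harc0 : r (P.a (i+1)) (fR (i+1) t') := by
                      rw [← hfR0 i, ← ht0]; exact harc
                    refine updB_kill (i+1) (fR (i+1) t') (hsingle harc0)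
                      (hRa (i+1) t' ht') (hRb (i+1) t' ht') ?_ ?_ ?_ ?_
                    · intro h
                      exact ht'n (hRinj (i+1) t' (nR (i+1)) ht' le_rfl (by rw [h, hfRn]))
                    · exact le_trans (dd_arc harc0) (hnP1 _)
                    · rw [hRd1 (i+1) t' ht']; exact ht'
                    · right; rw [hRd1 (i+1) t' ht']; omega
                  · exfalso
                    refine updBA_kill i (fR i t) (fR (i+1) t') (hRa i t ht) (hRb i t ht)
                      (hRa (i+1) t' ht') (hRb (i+1) t' ht') harc ?_ ?_ ?_ ?_
                    · intro h
                      exact ht0 (hRinj i t 0 ht (Nat.zero_le _) (by rw [h, hfR0]))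
                    · intro h
                      exact ht'n (hRinj (i+1) t' (nR (i+1)) ht' le_rfl (by rw [h, hfRn]))
                    · have htn' : t < nR i := lt_of_le_of_ne ht htn
                      rw [hRd2 i t ht]; omega
                    · rw [hRd1 (i+1) t' ht']; exact ht'
          · rw [zmod_add_sub_cancel] at h1
            exact absurd h1.symm hii
  
  -- global position machinery
  obtain ⟨len, hlendef⟩ : ∃ len : ℕ → ℕ, len = fun m : ℕ => nP (m : ZMod k) + nR (m : ZMod k) :=
    ⟨_, rfl⟩
  have hlenE : ∀ m, len m = nP (m : ZMod k) + nR (m : ZMod k) := fun m => by rw [hlendef]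
  obtain ⟨bigL, hbigLdef⟩ : ∃ bigL : ℕ → ℕ, bigL = fun m => ∑ t ∈ Finset.range m, len t :=
    ⟨_, rfl⟩
  have hbigLE : ∀ m, bigL m = ∑ t ∈ Finset.range m, len t := fun m => by rw [hbigLdef]
  have hbigL0 : bigL 0 = 0 := by rw [hbigLE]; simp
  have hbigLs : ∀ m, bigL (m + 1) = bigL m + len m := fun m => by
    rw [hbigLE, hbigLE, Finset.sum_range_succ]
  have hlen2 : ∀ m, 2 ≤ len m := by
    intro m
    have h1 := hnP1 (m : ZMod k)
    have h2 := hnR1 (m : ZMod k)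
    rw [hlenE]
    omega
  have hbigLmono : ∀ m m', m ≤ m' → bigL m ≤ bigL m' := by
    intro m m' h
    rw [hbigLE, hbigLE]
    exact Finset.sum_le_sum_of_subset (Finset.range_subset_range.2 h)
  obtain ⟨petal, hpetaldef⟩ : ∃ petal : ℕ → ℕ → V, petal = fun (m j : ℕ) =>
      if j ≤ nP (m : ZMod k) then fP (m : ZMod k) j
      else fR (m : ZMod k) (nR (m : ZMod k) - (j - nP (m : ZMod k))) := ⟨_, rfl⟩
  have petalE : ∀ m j, petal m j =
      if j ≤ nP (m : ZMod k) then fP (m : ZMod k) j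
      else fR (m : ZMod k) (nR (m : ZMod k) - (j - nP (m : ZMod k))) := fun m j => by
    rw [hpetaldef]
  obtain ⟨F, hFdef⟩ : ∃ F : ℕ → V, F = fun p =>
      petal (Nat.findGreatest (fun m => bigL m ≤ p) k)
        (p - bigL (Nat.findGreatest (fun m => bigL m ≤ p) k)) := ⟨_, rfl⟩
  have FE : ∀ p, F p = petal (Nat.findGreatest (fun m => bigL m ≤ p) k)
      (p - bigL (Nat.findGreatest (fun m => bigL m ≤ p) k)) := fun p => by rw [hFdef]
  have hfind : ∀ m, m < k → ∀ j, j < len m →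
      Nat.findGreatest (fun m' => bigL m' ≤ bigL m + j) k = m := by
    intro m hm j hj
    rw [Nat.findGreatest_eq_iff]
    refine ⟨by omega, fun _ => by omega, ?_⟩
    intro n' hn' hn'k hle
    have h1 : bigL (m + 1) ≤ bigL n' := hbigLmono _ _ (by omega)
    rw [hbigLs] at h1
    omega
  have hFblock : ∀ m, m < k → ∀ j, j < len m → F (bigL m + j) = petal m j := by
    intro m hm j hj
    rw [FE, hfind m hm j hj]
    congr 1
    omega
  have hcastv : ∀ i : ZMod k, ((i.val : ℕ) : ZMod k) = i := fun i =>
    ZMod.natCast_rightInverse i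
  have hFblock2 : ∀ m, m < k → ∀ j, j ≤ len m → F (bigL m + j) = petal m j := by
    intro m hm j hj
    rcases lt_or_eq_of_le hj with hj1 | hj1
    · exact hFblock m hm j hj1
    · subst hj1
      have hval : petal m (len m) = P.a ((m : ZMod k) + 1) := by
        rw [petalE]
        have h1 : ¬ (len m ≤ nP (m : ZMod k)) := by
          have := hnR1 (m : ZMod k); rw [hlenE]; omega
        rw [if_neg h1]
        have h2 : nR (m : ZMod k) - (len m - nP (m : ZMod k)) = 0 := by rw [hlenE]; omega
        rw [h2, hfR0]
      rw [hval]
      rcases Nat.lt_or_ge (m + 1) k with hmk | hmk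
      · have h3 := hFblock (m + 1) hmk 0 (by have := hlen2 (m + 1); omega)
        rw [Nat.add_zero] at h3
        rw [show bigL m + len m = bigL (m + 1) from (hbigLs m).symm, h3, petalE,
          if_pos (Nat.zero_le _), hfP0]
        congr 1
        exact_mod_cast Nat.cast_succ m
      · have hmk' : m + 1 = k := by omega
        have hfk : Nat.findGreatest (fun m' => bigL m' ≤ bigL k) k = k := by
          rw [Nat.findGreatest_eq_iff]
          refine ⟨le_rfl, fun _ => le_rfl, ?_⟩
          intro n hn hnk
          omega
        rw [show bigL m + len m = bigL k from by rw [← hmk', hbigLs], FE, hfk, Nat.sub_self,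
          petalE, if_pos (Nat.zero_le _), hfP0]
        congr 1
        have hc : ((k : ℕ) : ZMod k) = ((m + 1 : ℕ) : ZMod k) := by rw [hmk']
        rw [hc]
        exact_mod_cast Nat.cast_succ m
  have hFP : ∀ m, m < k → ∀ j, j ≤ nP (m : ZMod k) → F (bigL m + j) = fP (m : ZMod k) j := by
    intro m hm j hj
    rw [hFblock2 m hm j (by rw [hlenE]; omega), petalE, if_pos hj]
  have hFR : ∀ m, m < k → ∀ s, s ≤ nR (m : ZMod k) →
      F (bigL m + (nP (m : ZMod k) + (nR (m : ZMod k) - s))) = fR (m : ZMod k) s := by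
    intro m hm s hs
    rw [hFblock2 m hm _ (by rw [hlenE]; omega), petalE]
    by_cases h0 : s = nR (m : ZMod k)
    · rw [if_pos (by omega), show nP (m : ZMod k) + (nR (m : ZMod k) - s) = nP (m : ZMod k)
        from by omega, hfPn, h0, hfRn]
    · have hslt : s < nR (m : ZMod k) := lt_of_le_of_ne hs h0
      rw [if_neg (by omega)]
      congr 1
      omega
  have hL6 : 6 ≤ bigL k := by
    have hsum : ∀ m, 2 * m ≤ bigL m := by
      intro m
      induction m with
      | zero => omega
      | succ m ih =>
        have := hlen2 m
        rw [hbigLs]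
        omega
    have := hsum k
    omega
  have hclass : ∀ M, M ≤ k → ∀ p, p < bigL M → ∃ m, m < M ∧ ∃ j, j < len m ∧ p = bigL m + j := by
    intro M
    induction M with
    | zero => intro _ p hp; omega
    | succ M ih =>
      intro hMk p hp
      rcases Nat.lt_or_ge p (bigL M) with h1 | h1
      · obtain ⟨m, hm, j, hj, he⟩ := ih (by omega) p h1
        exact ⟨m, by omega, j, hj, he⟩
      · refine ⟨M, by omega, p - bigL M, ?_, by omega⟩
        rw [hbigLs] at hp
        omega
  have hadjF : ∀ p, p < bigL k → (SimpleGraph.fromRel r).Adj (F p) (F (p + 1)) := by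
    intro p hp
    obtain ⟨m, hm, j, hj, rfl⟩ := hclass k le_rfl p hp
    have e1 : F (bigL m + j) = petal m j := hFblock m hm j hj
    have e2 : F (bigL m + j + 1) = petal m (j + 1) := by
      rw [show bigL m + j + 1 = bigL m + (j + 1) from by omega]
      exact hFblock2 m hm (j + 1) (by omega)
    rw [e1, e2]
    by_cases h1 : j + 1 ≤ nP (m : ZMod k)
    · have hv1 : petal m j = fP (m : ZMod k) j := by rw [petalE, if_pos (by omega)]
      have hv2 : petal m (j + 1) = fP (m : ZMod k) (j + 1) := by rw [petalE, if_pos h1]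
      rw [hv1, hv2]
      have hstep : r (fP (m : ZMod k) j) (fP (m : ZMod k) (j + 1)) := by
        have := (hfP (m : ZMod k)).2.2 j (by have := hnPe (m : ZMod k); omega)
        exact this
      refine (SimpleGraph.fromRel_adj _ _ _).2 ⟨?_, Or.inl hstep⟩
      intro h
      have := hPinj (m : ZMod k) j (j + 1) (by omega) h1 h
      omega
    · have hv1 : petal m j = fR (m : ZMod k) (nR (m : ZMod k) - (j - nP (m : ZMod k))) := by
        rw [petalE]
        by_cases hj2 : j ≤ nP (m : ZMod k)
        · have hjeq : j = nP (m : ZMod k) := by omega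
          rw [if_pos hj2, hjeq, hfPn,
            show nR (m : ZMod k) - (nP (m : ZMod k) - nP (m : ZMod k)) = nR (m : ZMod k)
              from by omega, hfRn]
        · rw [if_neg hj2]
      have hv2 : petal m (j + 1) = fR (m : ZMod k) (nR (m : ZMod k) - (j + 1 - nP (m : ZMod k))) := by
        rw [petalE, if_neg (by omega)]
      rw [hv1, hv2]
      have hjlen : j + 1 ≤ nP (m : ZMod k) + nR (m : ZMod k) := by
        have := hlenE m; omega
      have hidx : nR (m : ZMod k) - (j - nP (m : ZMod k))
          = (nR (m : ZMod k) - (j + 1 - nP (m : ZMod k))) + 1 := by omega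
      have hstep : r (fR (m : ZMod k) (nR (m : ZMod k) - (j + 1 - nP (m : ZMod k))))
          (fR (m : ZMod k) (nR (m : ZMod k) - (j - nP (m : ZMod k)))) := by
        rw [hidx]
        have := (hfR (m : ZMod k)).2.2 (nR (m : ZMod k) - (j + 1 - nP (m : ZMod k)))
          (by have := hnRe (m : ZMod k); omega)
        exact this
      refine (SimpleGraph.fromRel_adj _ _ _).2 ⟨?_, Or.inr hstep⟩
      intro h
      have := hRinj (m : ZMod k) _ _ (by omega) (by omega) h
      omega
  have hper : F (bigL k) = F 0 := by
    have hb : F (bigL k) = petal (k - 1) (len (k - 1)) := by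
      rw [show bigL k = bigL (k - 1) + len (k - 1) from by
        rw [← hbigLs, show k - 1 + 1 = k from by omega]]
      exact hFblock2 (k - 1) (by omega) _ le_rfl
    have hval : petal (k - 1) (len (k - 1)) = P.a (((k - 1 : ℕ) : ZMod k) + 1) := by
      rw [petalE]
      have h1 : ¬ (len (k - 1) ≤ nP ((k - 1 : ℕ) : ZMod k)) := by
        have := hnR1 ((k - 1 : ℕ) : ZMod k); rw [hlenE]; omega
      rw [if_neg h1,
        show nR ((k - 1 : ℕ) : ZMod k) - (len (k - 1) - nP ((k - 1 : ℕ) : ZMod k)) = 0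
          from by rw [hlenE]; omega, hfR0]
    have h0 : F 0 = P.a ((0 : ℕ) : ZMod k) := by
      have := hFP 0 (by omega) 0 (Nat.zero_le _)
      rw [hbigL0, Nat.add_zero] at this
      rw [this, hfP0]
    rw [hb, hval, h0]
    congr 1
    have hc1 : (((k - 1 : ℕ) : ZMod k) : ZMod k) + 1 = (((k - 1 : ℕ) + 1 : ℕ) : ZMod k) := by
      push_cast
      ring
    rw [hc1, show (k - 1) + 1 = k from by omega, ZMod.natCast_self]
    simp
  have hFinj : ∀ p q, p < bigL k → q < bigL k → F p = F q → p = q := by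
    intro p q hp hq he
    obtain ⟨m, hm, j, hj, rfl⟩ := hclass k le_rfl p hp
    obtain ⟨m', hm', j', hj', rfl⟩ := hclass k le_rfl q hq
    rw [hFblock m hm j hj, hFblock m' hm' j' hj', petalE, petalE] at he
    have hjlen : j < nP (m : ZMod k) + nR (m : ZMod k) := by have := hlenE m; omega
    have hj'len : j' < nP (m' : ZMod k) + nR (m' : ZMod k) := by have := hlenE m'; omega
    by_cases hjP : j ≤ nP (m : ZMod k) <;> by_cases hj'P : j' ≤ nP (m' : ZMod k)
    · rw [if_pos hjP, if_pos hj'P] at he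
      by_cases hmm' : m = m'
      · subst hmm'
        have := hPinj (m : ZMod k) j j' hjP hj'P he
        omega
      · exact absurd he (fun h =>
          keyPP _ _ j j' hjP hj'P h (fun hc => hmm' (zmod_cast_inj hm hm' hc)))
    · rw [if_pos hjP, if_neg hj'P] at he
      exact absurd he (fun h => keyPR (m : ZMod k) (m' : ZMod k) j _ hjP
        (by omega) (by omega) h)
    · rw [if_neg hjP, if_pos hj'P] at he
      exact absurd he.symm (fun h => keyPR (m' : ZMod k) (m : ZMod k) j' _ hj'P
        (by omega) (by omega) h)
    · rw [if_neg hjP, if_neg hj'P] at he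
      by_cases hmm' : m = m'
      · subst hmm'
        have := hRinj (m : ZMod k) _ _ (by omega) (by omega) he
        omega
      · exact absurd he (fun h => keyRR _ _ _ _ (by omega) (by omega) h
          (fun hc => hmm' (zmod_cast_inj hm hm' hc)))
  have hdesc : ∀ p', p' ≤ bigL k →
      (∃ (i : ZMod k) (s : ℕ), s ≤ nP i ∧ F p' = fP i s) ∨
      (∃ (i : ZMod k) (t : ℕ), t ≤ nR i ∧ F p' = fR i t) := by
    intro p' hp'
    rcases lt_or_eq_of_le hp' with h1 | h1
    · obtain ⟨m, hm, j, hj, rfl⟩ := hclass k le_rfl p' h1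
      rw [hFblock m hm j hj, petalE]
      by_cases hjP : j ≤ nP (m : ZMod k)
      · rw [if_pos hjP]
        exact Or.inl ⟨_, j, hjP, rfl⟩
      · rw [if_neg hjP]
        exact Or.inr ⟨_, _, by omega, rfl⟩
    · subst h1
      left
      refine ⟨(0 : ℕ), 0, Nat.zero_le _, ?_⟩
      rw [hper]
      have := hFP 0 (by omega) 0 (Nat.zero_le _)
      rw [hbigL0, Nat.add_zero] at this
      exact this
  have hmap : ∀ u v : V,
      ((∃ (i : ZMod k) (s : ℕ), s + 1 ≤ nP i ∧ u = fP i s ∧ v = fP i (s + 1)) ∨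
       (∃ (i : ZMod k) (t : ℕ), t + 1 ≤ nR i ∧ u = fR i t ∧ v = fR i (t + 1))) →
      ∃ m < bigL k, s(u, v) = s(F m, F (m + 1)) := by
    rintro u v (⟨i, s, hs1, rfl, rfl⟩ | ⟨i, t, ht1, rfl, rfl⟩)
    · refine ⟨bigL i.val + s, ?_, ?_⟩
      · have h1 : bigL (i.val + 1) ≤ bigL k := hbigLmono _ _ (ZMod.val_lt i)
        rw [hbigLs] at h1
        have h2 := hlenE i.val
        rw [hcastv i] at h2
        omega
      · have e1 := hFP i.val (ZMod.val_lt i) s (by rw [hcastv i]; omega)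
        have e2 := hFP i.val (ZMod.val_lt i) (s + 1) (by rw [hcastv i]; omega)
        rw [hcastv i] at e1 e2
        rw [← e1, ← e2, show bigL i.val + s + 1 = bigL i.val + (s + 1) from by omega]
    · refine ⟨bigL i.val + (nP i + (nR i - (t + 1))), ?_, ?_⟩
      · have h1 : bigL (i.val + 1) ≤ bigL k := hbigLmono _ _ (ZMod.val_lt i)
        rw [hbigLs] at h1
        have h2 := hlenE i.val
        rw [hcastv i] at h2
        omega
      · have e1 := hFR i.val (ZMod.val_lt i) (t + 1) (by rw [hcastv i]; omega)
        have e2 := hFR i.val (ZMod.val_lt i) t (by rw [hcastv i]; omega)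
        rw [hcastv i] at e1 e2
        rw [← e1, ← e2,
          show bigL i.val + (nP i + (nR i - t))
            = bigL i.val + (nP i + (nR i - (t + 1))) + 1 from by omega]
        exact Sym2.eq_swap
  have hindF : ∀ x y, (∃ p ≤ bigL k, F p = x) → (∃ q ≤ bigL k, F q = y) →
      (SimpleGraph.fromRel r).Adj x y → ∃ m < bigL k, s(x, y) = s(F m, F (m + 1)) := by
    rintro x y ⟨p, hp, rfl⟩ ⟨q, hq, rfl⟩ hadj
    rcases (SimpleGraph.fromRel_adj _ _ _).1 hadj with ⟨hne, harc | harc⟩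
    · exact hmap _ _ (keyArc _ _ harc (hdesc p hp) (hdesc q hq))
    · obtain ⟨m, hm, heq⟩ := hmap _ _ (keyArc _ _ harc (hdesc q hq) (hdesc p hp))
      exact ⟨m, hm, by rw [Sym2.eq_swap]; exact heq⟩
  exact hasInducedCycleGe_of (SimpleGraph.fromRel r) F (bigL k) hL6 hadjF hper hFinj hindF
end main

lemma pat_to_cycle {r : V → V → Prop} (hacyc : ∀ v, ¬ Relation.TransGen r v v)
    {k : ℕ} [NeZero k] (hk : 3 ≤ k) (P : Pat r k) :
    HasInducedCycleGe (SimpleGraph.fromRel r) 6 :=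
  pat_to_cycle_aux hacyc (pL P) hk P le_rfl

end FlatChordal

/-- If the underlying undirected graph of a weakly connected acyclic digraph with at least
one arc has no induced cycle of length ≥ 6, then neither has its flattened graph. -/
theorem flattened_chordal_bipartite {V : Type*} [Fintype V] [DecidableEq V]
    (r : V → V → Prop)
    (hacyc : ∀ v, ¬ Relation.TransGen r v v)
    (hconn : (SimpleGraph.fromRel r).Connected)
    (harc : ∃ x y, r x y)
    (hcb : ¬ HasInducedCycleGe (SimpleGraph.fromRel r) 6) :
    ¬ HasInducedCycleGe (flattened r) 6 := by
  intro h
  obtain ⟨k, hk3, ⟨P⟩⟩ := FlatChordal.extract_pat hacyc h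
  haveI : NeZero k := ⟨by omega⟩
  exact hcb (FlatChordal.pat_to_cycle hacyc hk3 P)
end
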